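/- Let 𝒜 be a finite, central, essential, simplicial real arrangement. Let F ⊆ F′ be two faces of Z(𝒜), let B be the subspace dual to F, and let y be a vertex of F. Then the morphism Δ^y(F′)(Δ^y(F))⁻¹ is equivalent to a concatenation of elementary B-segments. -/

import Mathlib

open scoped Classical

noncomputable section

namespace DelGrpd

variable {A : Type} [NormedAddCommGroup A] [InnerProductSpace ℝ A] [FiniteDimensional ℝ A]

/-- A finite, central, essential arrangement of linear hyperplanes in the real vector
space `A`. -/
structure RealArr (A : Type) [NormedAddCommGroup A] [InnerProductSpace ℝ A]
    [FiniteDimensional ℝ A] where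
  hyps : Finset (Submodule ℝ A)
  coatoms : ∀ H ∈ hyps, IsCoatom H
  essential : hyps.inf id = ⊥

/-- The complement of the arrangement. -/
def cmpl (𝒜 : RealArr A) : Set A := {x | ∀ H ∈ 𝒜.hyps, x ∉ H}

/-- A chamber: a connected component of the complement. -/
def IsChamber (𝒜 : RealArr A) (C : Set A) : Prop :=
  ∃ x ∈ cmpl 𝒜, C = connectedComponentIn (cmpl 𝒜) x

/-- The type of chambers of `𝒜`. -/
def Chamber (𝒜 : RealArr A) : Type := {C : Set A // IsChamber 𝒜 C}

/-- The arrangement is simplicial: every chamber is an open simplicial cone. -/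
def Simplicial (𝒜 : RealArr A) : Prop :=
  ∀ C : Set A, IsChamber 𝒜 C →
    ∃ f : Fin (Module.finrank ℝ A) → (A →ₗ[ℝ] ℝ),
      LinearIndependent ℝ f ∧ C = {x | ∀ i, 0 < f i x}

/-- The arrangement is irreducible (not a nontrivial direct sum). -/
def Irred (𝒜 : RealArr A) : Prop :=
  ¬ ∃ V₁ V₂ : Submodule ℝ A, IsCompl V₁ V₂ ∧ V₁ ≠ ⊥ ∧ V₂ ≠ ⊥ ∧
    ∀ H ∈ 𝒜.hyps, V₁ ≤ H ∨ V₂ ≤ H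

/-- The hyperplane `H` separates the sets `C` and `D`. -/
def Separates (H : Submodule ℝ A) (C D : Set A) : Prop :=
  ∃ f : A →ₗ[ℝ] ℝ, LinearMap.ker f = H ∧ (∀ x ∈ C, 0 < f x) ∧ (∀ x ∈ D, f x < 0)

/-- Two chambers are adjacent when exactly one hyperplane of `𝒜` separates them. -/
def Adj (𝒜 : RealArr A) (C D : Chamber 𝒜) : Prop :=
  ∃! H : Submodule ℝ A, H ∈ 𝒜.hyps ∧ Separates H C.1 D.1

/-- A step of an edge path in the graph `Γ(𝒜)`: an arrow of `Γ(𝒜)` traversed either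
positively or negatively (formal inverse). -/
inductive Step (𝒜 : RealArr A) : Chamber 𝒜 → Chamber 𝒜 → Type
  | pos {x y : Chamber 𝒜} (h : Adj 𝒜 x y) : Step 𝒜 x y
  | neg {x y : Chamber 𝒜} (h : Adj 𝒜 y x) : Step 𝒜 x y

/-- The sign of a step. -/
def Step.sign {𝒜 : RealArr A} {x y : Chamber 𝒜} : Step 𝒜 x y → ℤ
  | .pos _ => 1
  | .neg _ => -1

/-- Reversal of a step. -/
def Step.symm {𝒜 : RealArr A} {x y : Chamber 𝒜} : Step 𝒜 x y → Step 𝒜 y x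
  | .pos h => .neg h
  | .neg h => .pos h

/-- Edge paths in `Γ(𝒜)` (words in the arrows and their formal inverses). -/
inductive Path (𝒜 : RealArr A) : Chamber 𝒜 → Chamber 𝒜 → Type
  | nil (x : Chamber 𝒜) : Path 𝒜 x x
  | cons {x y z : Chamber 𝒜} (s : Step 𝒜 x y) (p : Path 𝒜 y z) : Path 𝒜 x z

namespace Path

variable {𝒜 : RealArr A}

/-- Concatenation of paths. -/
def comp : {x y z : Chamber 𝒜} → Path 𝒜 x y → Path 𝒜 y z → Path 𝒜 x z
  | _, _, _, .nil _, q => q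
  | _, _, _, .cons s p, q => .cons s (comp p q)

/-- The inverse path. -/
def inv : {x y : Chamber 𝒜} → Path 𝒜 x y → Path 𝒜 y x
  | _, _, .nil x => .nil x
  | _, _, .cons s p => comp (inv p) (.cons s.symm (.nil _))

/-- The length of a path. -/
def length : {x y : Chamber 𝒜} → Path 𝒜 x y → ℕ
  | _, _, .nil _ => 0
  | _, _, .cons _ p => length p + 1

/-- A path is positive when all of its steps are positive. -/
def Positive : {x y : Chamber 𝒜} → Path 𝒜 x y → Prop
  | _, _, .nil _ => True
  | _, _, .cons (.pos _) p => Positive p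
  | _, _, .cons (.neg _) _ => False

/-- A path is minimal when no path with the same endpoints is shorter. -/
def Minimal {x y : Chamber 𝒜} (p : Path 𝒜 x y) : Prop :=
  ∀ q : Path 𝒜 x y, p.length ≤ q.length

@[simp] theorem nil_comp {x y : Chamber 𝒜} (p : Path 𝒜 x y) : comp (.nil x) p = p := rfl

@[simp] theorem comp_nil {x y : Chamber 𝒜} (p : Path 𝒜 x y) : comp p (.nil y) = p := by
  induction p with
  | nil _ => rfl
  | cons s p ih => simp [comp, ih]

theorem comp_assoc {w x y z : Chamber 𝒜} (p : Path 𝒜 w x) (q : Path 𝒜 x y) (r : Path 𝒜 y z) :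
    comp (comp p q) r = comp p (comp q r) := by
  induction p with
  | nil _ => rfl
  | cons s p ih => simp [comp, ih]

@[simp] theorem step_symm_symm {x y : Chamber 𝒜} (s : Step 𝒜 x y) : s.symm.symm = s := by
  cases s <;> rfl

theorem inv_comp {x y z : Chamber 𝒜} (p : Path 𝒜 x y) (q : Path 𝒜 y z) :
    inv (comp p q) = comp (inv q) (inv p) := by
  induction p with
  | nil _ => simp [inv]
  | cons s p ih => simp [comp, inv, ih, comp_assoc]

@[simp] theorem inv_inv {x y : Chamber 𝒜} (p : Path 𝒜 x y) : inv (inv p) = p := by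
  induction p with
  | nil _ => rfl
  | cons s p ih =>
      show inv (comp (inv p) (.cons s.symm (.nil _))) = _
      rw [inv_comp, ih]
      simp [inv, comp]

end Path

/-- Equivalence of edge paths: the smallest equivalence relation such that (a) `p ⬝ p⁻¹` is
equivalent to the constant path, (b) it is closed under inversion, (c) it is preserved by
pre- and post-concatenation, and (d) any two minimal positive paths with the same endpoints
are equivalent. -/
inductive Rel (𝒜 : RealArr A) : {x y : Chamber 𝒜} → Path 𝒜 x y → Path 𝒜 x y → Prop
  | refl {x y : Chamber 𝒜} (p : Path 𝒜 x y) : Rel 𝒜 p p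
  | symm {x y : Chamber 𝒜} {p q : Path 𝒜 x y} : Rel 𝒜 p q → Rel 𝒜 q p
  | trans {x y : Chamber 𝒜} {p q r : Path 𝒜 x y} : Rel 𝒜 p q → Rel 𝒜 q r → Rel 𝒜 p r
  | cancel {x y : Chamber 𝒜} (p : Path 𝒜 x y) : Rel 𝒜 (p.comp p.inv) (Path.nil x)
  | inv {x y : Chamber 𝒜} {p q : Path 𝒜 x y} : Rel 𝒜 p q → Rel 𝒜 p.inv q.inv
  | congr_left {w x y : Chamber 𝒜} (h : Path 𝒜 w x) {p q : Path 𝒜 x y} :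
      Rel 𝒜 p q → Rel 𝒜 (h.comp p) (h.comp q)
  | congr_right {x y z : Chamber 𝒜} (h : Path 𝒜 y z) {p q : Path 𝒜 x y} :
      Rel 𝒜 p q → Rel 𝒜 (p.comp h) (q.comp h)
  | minpos {x y : Chamber 𝒜} (p q : Path 𝒜 x y) :
      p.Positive → q.Positive → p.Minimal → q.Minimal → Rel 𝒜 p q

instance pathSetoid (𝒜 : RealArr A) (x y : Chamber 𝒜) : Setoid (Path 𝒜 x y) :=
  ⟨Rel 𝒜, ⟨Rel.refl, Rel.symm, Rel.trans⟩⟩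

/-- Morphisms of the Deligne groupoid `G(𝒜)`: equivalence classes of edge paths. -/
def Mor (𝒜 : RealArr A) (x y : Chamber 𝒜) : Type := Quotient (pathSetoid 𝒜 x y)

namespace Mor

variable {𝒜 : RealArr A}

/-- Composition of morphisms of the Deligne groupoid. -/
def comp {x y z : Chamber 𝒜} : Mor 𝒜 x y → Mor 𝒜 y z → Mor 𝒜 x z :=
  Quotient.lift₂ (fun p q => (⟦p.comp q⟧ : Mor 𝒜 x z))
    (fun _ _ _ _ hp hq =>
      Quotient.sound ((Rel.congr_right _ hp).trans (Rel.congr_left _ hq)))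

/-- Inversion of morphisms of the Deligne groupoid. -/
def symm {x y : Chamber 𝒜} : Mor 𝒜 x y → Mor 𝒜 y x :=
  Quotient.map Path.inv (fun _ _ h => Rel.inv h)

@[simp] theorem comp_mk {x y z : Chamber 𝒜} (p : Path 𝒜 x y) (q : Path 𝒜 y z) :
    comp (⟦p⟧ : Mor 𝒜 x y) ⟦q⟧ = ⟦p.comp q⟧ := rfl

/-- A positive morphism: one represented by a positive path. -/
def Pos {x y : Chamber 𝒜} (φ : Mor 𝒜 x y) : Prop :=
  ∃ p : Path 𝒜 x y, p.Positive ∧ φ = ⟦p⟧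

/-- The identity morphisms (possibly after identification of the endpoints): morphisms
represented by a path of length zero. -/
def IsId {x y : Chamber 𝒜} (φ : Mor 𝒜 x y) : Prop :=
  ∃ p : Path 𝒜 x y, p.length = 0 ∧ φ = ⟦p⟧

end Mor

/-- The isotropy group of the Deligne groupoid at the chamber `x`. -/
instance morGroup (𝒜 : RealArr A) (x : Chamber 𝒜) : Group (Mor 𝒜 x x) where
  mul := Mor.comp
  one := (⟦Path.nil x⟧ : Mor 𝒜 x x)
  inv := Mor.symm
  mul_assoc a b c := by
    refine Quotient.inductionOn₃ a b c fun p q r => ?_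
    show (⟦(p.comp q).comp r⟧ : Mor 𝒜 x x) = ⟦p.comp (q.comp r)⟧
    rw [Path.comp_assoc]
  one_mul a := by
    refine Quotient.inductionOn a fun p => ?_
    show (⟦(Path.nil x).comp p⟧ : Mor 𝒜 x x) = ⟦p⟧
    rw [Path.nil_comp]
  mul_one a := by
    refine Quotient.inductionOn a fun p => ?_
    show (⟦p.comp (Path.nil x)⟧ : Mor 𝒜 x x) = ⟦p⟧
    rw [Path.comp_nil]
  inv_mul_cancel a := by
    refine Quotient.inductionOn a fun p => ?_
    show (⟦p.inv.comp p⟧ : Mor 𝒜 x x) = ⟦Path.nil x⟧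
    have h := Rel.cancel (𝒜 := 𝒜) p.inv
    rw [Path.inv_inv] at h
    exact Quotient.sound h

/-- The prefix order on morphisms: `f ≼ g` iff `g = f ⬝ h` for a positive `h`. -/
def prefixLe {𝒜 : RealArr A} {x y z : Chamber 𝒜} (f : Mor 𝒜 x y) (g : Mor 𝒜 x z) : Prop :=
  ∃ h : Mor 𝒜 y z, h.Pos ∧ g = f.comp h

/-- The suffix order on morphisms: `f` is a suffix of `g` iff `g = h ⬝ f` for a positive `h`. -/
def suffixLe {𝒜 : RealArr A} {x y z : Chamber 𝒜} (f : Mor 𝒜 y z) (g : Mor 𝒜 x z) : Prop :=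
  ∃ h : Mor 𝒜 x y, h.Pos ∧ g = h.comp f

end DelGrpd

namespace DelGrpd

variable {A : Type} [NormedAddCommGroup A] [InnerProductSpace ℝ A] [FiniteDimensional ℝ A]

/-- A face of the dual zonotope `Z(𝒜)`, encoded by the corresponding cone of the fan of `𝒜`:
the face is dual to the subspace `B ∈ Q̂(𝒜)` and corresponds to the connected component `c`
of `B` minus the hyperplanes not containing `B`. -/
structure Face (𝒜 : RealArr A) where
  B : Submodule ℝ A
  c : Set A
  hB : ∃ S : Finset (Submodule ℝ A), S ⊆ 𝒜.hyps ∧ B = S.inf id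
  hc : ∃ x : A, x ∈ B ∧ (∀ H ∈ 𝒜.hyps, ¬ B ≤ H → x ∉ H) ∧
    c = connectedComponentIn {y : A | y ∈ B ∧ ∀ H ∈ 𝒜.hyps, ¬ B ≤ H → y ∉ H} x

variable {𝒜 : RealArr A}

/-- The chamber `v` is a vertex of the face `F`. -/
def Face.vert (F : Face 𝒜) (v : Chamber 𝒜) : Prop := F.c ⊆ closure v.1


section Paths

variable {𝒜 : RealArr A}

/-- All chambers visited by the path are vertices of the face `F` (see `Face.vert`);
i.e. the image of the path under `π` is contained in `F`. -/
def Path.InFace (F : Face 𝒜) : {x y : Chamber 𝒜} → Path 𝒜 x y → Prop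
  | x, _, .nil _ => F.vert x
  | x, _, .cons _ p => F.vert x ∧ Path.InFace F p

/-- The path crosses the hyperplane `H` (some step of it is dual to `H`). -/
def Path.Crosses (H : Submodule ℝ A) : {x y : Chamber 𝒜} → Path 𝒜 x y → Prop
  | _, _, .nil _ => False
  | _, _, @Path.cons _ _ _ _ _ x y _ _ p => Separates H x.1 y.1 ∨ Path.Crosses H p

/-- The signed intersection number of a path with the hyperplane `H`: the sum of the signs
of the steps dual to `H`. -/
def Path.icount (H : Submodule ℝ A) : {x y : Chamber 𝒜} → Path 𝒜 x y → ℤ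
  | _, _, .nil _ => 0
  | _, _, @Path.cons _ _ _ _ _ x y _ s p =>
      (if Separates H x.1 y.1 then s.sign else 0) + Path.icount H p

end Paths


/-- Containment of faces of the zonotope (every vertex of `F` is a vertex of `F'`). -/
def Face.le (F F' : Face 𝒜) : Prop := ∀ v : Chamber 𝒜, F.vert v → F'.vert v

/-- A proper face of `Z(𝒜)`: neither a vertex nor the whole zonotope. -/
def Face.Proper (F : Face 𝒜) : Prop := F.B ≠ ⊤ ∧ F.B ≠ ⊥

/-- The face `F` is irreducible, i.e. the normal arrangement `𝒜_{A/B}` of its dual subspace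
`B` does not decompose as a nontrivial direct sum. -/
def Face.Irr (F : Face 𝒜) : Prop :=
  ¬ ∃ W₁ W₂ : Submodule ℝ A, F.B ≤ W₁ ∧ F.B ≤ W₂ ∧ W₁ ⊓ W₂ = F.B ∧ W₁ ⊔ W₂ = ⊤ ∧
    W₁ ≠ F.B ∧ W₂ ≠ F.B ∧ ∀ H ∈ 𝒜.hyps, F.B ≤ H → (W₁ ≤ H ∨ W₂ ≤ H)

/-- `H` is dual to an edge of the face `F`. -/
def DualEdge (F : Face 𝒜) (H : Submodule ℝ A) : Prop :=
  H ∈ 𝒜.hyps ∧ ∃ v w : Chamber 𝒜, F.vert v ∧ F.vert w ∧ Adj 𝒜 v w ∧ Separates H v.1 w.1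

/-- `y = Ant(x, F)`, the antipodal vertex of `x` in the face `F`: the vertex of `F`
separated from `x` by exactly the hyperplanes dual to the edges of `F` (equivalently, by
exactly the hyperplanes containing the dual subspace `B` of `F`). -/
def IsAnt (F : Face 𝒜) (x y : Chamber 𝒜) : Prop :=
  F.vert x ∧ F.vert y ∧ ∀ H ∈ 𝒜.hyps, (F.B ≤ H ↔ Separates H x.1 y.1)

/-- `v = proj_F x`, the vertex of `F` of minimal distance to `x` in the `1`-skeleton of
`Z(𝒜)`. -/
def IsProj (F : Face 𝒜) (x v : Chamber 𝒜) : Prop :=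
  F.vert v ∧ ∀ w : Chamber 𝒜, F.vert w → ∀ q : Path 𝒜 x w,
    ∃ p : Path 𝒜 x v, p.length ≤ q.length

/-- `φ = Δ_x(F)` (equivalently `Δ^{Ant(x,F)}(F)`): the Garside morphism of the face `F`,
represented by a minimal positive path from `x` to `Ant(x, F)` inside `F`. -/
def IsGarside (F : Face 𝒜) {x y : Chamber 𝒜} (φ : Mor 𝒜 x y) : Prop :=
  IsAnt F x y ∧ ∃ p : Path 𝒜 x y, p.Positive ∧ p.Minimal ∧ p.InFace F ∧ φ = ⟦p⟧

/-- `x' = p(x)` where `p : F → F'` is the parallel translation between the parallel faces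
`F` and `F'`: `x'` is the vertex of `F'` not separated from `x` by any hyperplane
containing the common dual subspace `B`. -/
def ParTrans (F F' : Face 𝒜) (x x' : Chamber 𝒜) : Prop :=
  F.B = F'.B ∧ F.vert x ∧ F'.vert x' ∧
    ∀ H ∈ 𝒜.hyps, F.B ≤ H → ¬ Separates H x.1 x'.1

/-- The parallel faces `F` and `F'` are adjacent: they are distinct, dual to the same
subspace, and contained in a common face of one higher dimension. -/
def AdjFaces (F F' : Face 𝒜) : Prop :=
  F ≠ F' ∧ F.B = F'.B ∧ ∃ F₀ : Face 𝒜, F.le F₀ ∧ F'.le F₀ ∧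
    Module.finrank ℝ F.B = Module.finrank ℝ F₀.B + 1

/-- `φ` is an `(F, F')`-elementary `B`-segment: `F` and `F'` are adjacent parallel faces
dual to `B` and `φ` is represented by a minimal positive path from a vertex `x ∈ F` to the
parallel translate `p(x) ∈ F'`. -/
def IsElemSeg (F F' : Face 𝒜) {x x' : Chamber 𝒜} (φ : Mor 𝒜 x x') : Prop :=
  AdjFaces F F' ∧ ParTrans F F' x x' ∧
    ∃ p : Path 𝒜 x x', p.Positive ∧ p.Minimal ∧ φ = ⟦p⟧

/-- `φ` is an elementary `Bs`-segment (for some pair of adjacent parallel faces dual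
to `Bs`). -/
def IsElemSegB (Bs : Submodule ℝ A) {x x' : Chamber 𝒜} (φ : Mor 𝒜 x x') : Prop :=
  ∃ F F' : Face 𝒜, F.B = Bs ∧ IsElemSeg F F' φ

/-- `φ` is a (possibly empty) concatenation of elementary `Bs`-segments. -/
inductive IsElemComp (𝒜 : RealArr A) (Bs : Submodule ℝ A) :
    {x y : Chamber 𝒜} → Mor 𝒜 x y → Prop
  | nil (x : Chamber 𝒜) : IsElemComp 𝒜 Bs (⟦Path.nil x⟧ : Mor 𝒜 x x)
  | single {x y : Chamber 𝒜} (φ : Mor 𝒜 x y) : IsElemSegB Bs φ → IsElemComp 𝒜 Bs φ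
  | comp {x y z : Chamber 𝒜} (φ : Mor 𝒜 x y) (ψ : Mor 𝒜 y z) :
      IsElemComp 𝒜 Bs φ → IsElemComp 𝒜 Bs ψ → IsElemComp 𝒜 Bs (φ.comp ψ)

/-- `z = 𝒵_F`, the standard Dehn twist of the face `F` with respect to the base chamber
`x₀`: `z = h_F (Δ_{x_F}(F))² h_F⁻¹`, where `x_F = proj_F x₀` and `h_F` is (the class of) a
minimal positive path from `x₀` to `x_F`. -/
def IsDehnTwist (x₀ : Chamber 𝒜) (F : Face 𝒜) (z : Mor 𝒜 x₀ x₀) : Prop :=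
  ∃ (v y : Chamber 𝒜) (h : Mor 𝒜 x₀ v) (δ : Mor 𝒜 v y) (δ' : Mor 𝒜 y v),
    IsProj F x₀ v ∧
    (∃ p : Path 𝒜 x₀ v, p.Positive ∧ p.Minimal ∧ h = ⟦p⟧) ∧
    IsGarside F δ ∧ IsGarside F δ' ∧
    z = h.comp (δ.comp (δ'.comp h.symm))

/-- `Z` is a standard `ℤ`-subgroup of the isotropy group `G_{x₀}` of the Deligne groupoid:
a conjugate of the cyclic subgroup generated by the standard Dehn twist of a proper
irreducible face. -/
def IsStdZSubgroup (x₀ : Chamber 𝒜) (Z : Subgroup (Mor 𝒜 x₀ x₀)) : Prop :=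
  ∃ (F : Face 𝒜) (z g : Mor 𝒜 x₀ x₀), F.Proper ∧ F.Irr ∧ IsDehnTwist x₀ F z ∧
    Z = Subgroup.zpowers (g * z * g⁻¹)

/-- The geometric realization of an abstract simplicial complex `K` on the vertex set `α`
(the faces are the nonempty finite sets belonging to `K`). -/
def realization {α : Type*} (K : Set (Finset α)) : Type _ :=
  {f : α → ℝ // (∀ a, 0 ≤ f a) ∧ (∃ s ∈ K, ∀ a, f a ≠ 0 → a ∈ s) ∧ ∑ᶠ a, f a = 1}

instance {α : Type*} (K : Set (Finset α)) : TopologicalSpace (realization K) :=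
  instTopologicalSpaceSubtype


/-- same strict sign -/
def ss (a b : ℝ) : Prop := 0 < a * b

lemma ss_symm {a b : ℝ} (h : ss a b) : ss b a := by unfold ss at *; nlinarith

lemma ss_comm {a b : ℝ} : ss a b ↔ ss b a := ⟨ss_symm, ss_symm⟩

lemma ss_self {a : ℝ} (h : a ≠ 0) : ss a a := mul_self_pos.mpr h

lemma ss_ne_left {a b : ℝ} (h : ss a b) : a ≠ 0 := by
  rintro rfl; simp [ss] at h

lemma ss_ne_right {a b : ℝ} (h : ss a b) : b ≠ 0 := by
  rintro rfl; simp [ss] at h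

lemma ss_trans {a b c : ℝ} (h1 : ss a b) (h2 : ss b c) : ss a c := by
  have hb : b ≠ 0 := ss_ne_right h1
  have := mul_pos h1 h2
  have hb2 : 0 < b * b := mul_self_pos.mpr hb
  unfold ss at *; nlinarith

lemma ns_ns {a b c : ℝ} (h1 : ¬ ss a c) (h2 : ¬ ss b c) (ha : a ≠ 0) (hb : b ≠ 0)
    (hc : c ≠ 0) : ss a b := by
  have hac : a * c < 0 := lt_of_le_of_ne (not_lt.mp h1) (mul_ne_zero ha hc)
  have hbc : b * c < 0 := lt_of_le_of_ne (not_lt.mp h2) (mul_ne_zero hb hc)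
  have hc2 : 0 < c * c := mul_self_pos.mpr hc
  have := mul_pos_of_neg_of_neg hac hbc
  unfold ss; nlinarith

lemma not_ss_of_ss_not {a b c : ℝ} (h : ss a b) (h2 : ¬ ss b c) : ¬ ss a c :=
  fun h3 => h2 (ss_trans (ss_symm h) h3)

lemma exists_ker_eq {H : Submodule ℝ A} (hH : IsCoatom H) :
    ∃ f : A →ₗ[ℝ] ℝ, LinearMap.ker f = H := by
  obtain ⟨v, hv⟩ : ∃ v, v ∉ H := by
    by_contra h; push_neg at h; exact hH.1 (top_unique fun x _ => h x)
  set π := H.mkQ with hπ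
  have hv' : π v ≠ 0 := by
    simpa [π, Submodule.Quotient.mk_eq_zero] using hv
  have hvmem : v ∈ H ⊔ Submodule.span ℝ {v} :=
    Submodule.mem_sup_right (Submodule.mem_span_singleton_self v)
  have hlt : H < H ⊔ Submodule.span ℝ {v} :=
    lt_of_le_of_ne le_sup_left (fun he => hv (by rw [he]; exact hvmem))
  have htop : H ⊔ Submodule.span ℝ {v} = ⊤ := hH.2 _ hlt
  have h1 : Submodule.map π H = ⊥ := by
    rw [Submodule.eq_bot_iff]
    rintro x ⟨y, hy, rfl⟩
    simpa [π, Submodule.Quotient.mk_eq_zero] using hy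
  have h2 : Submodule.span ℝ {π v} = ⊤ := by
    have := congrArg (Submodule.map π) htop
    rwa [Submodule.map_sup, h1, bot_sup_eq, Submodule.map_span, Set.image_singleton,
      Submodule.map_top, Submodule.range_mkQ] at this
  set e : ℝ →ₗ[ℝ] (A ⧸ H) := LinearMap.toSpanSingleton ℝ _ (π v) with he
  have hinj : Function.Injective e := by
    intro r s hrs
    exact smul_left_injective ℝ hv' hrs
  have hsurj : Function.Surjective e := by
    rw [← LinearMap.range_eq_top, ← LinearMap.span_singleton_eq_range, h2]
  set eq : ℝ ≃ₗ[ℝ] (A ⧸ H) := LinearEquiv.ofBijective e ⟨hinj, hsurj⟩ with heq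
  refine ⟨eq.symm.toLinearMap ∘ₗ π, ?_⟩
  ext x
  simp only [LinearMap.mem_ker, LinearMap.coe_comp, Function.comp_apply,
    LinearEquiv.coe_coe, map_eq_zero_iff _ eq.symm.injective]
  rw [show (0 : A ⧸ H) = π 0 by simp]
  constructor
  · intro hx
    have : x - 0 ∈ H := by
      simpa [π] using (Submodule.Quotient.eq H).mp hx
    simpa using this
  · intro hx
    simp only [map_zero]
    simpa [π, Submodule.Quotient.mk_eq_zero] using hx

/-- a fixed linear functional with kernel `H`, for `H` a hyperplane -/
def fH (H : Submodule ℝ A) : A →ₗ[ℝ] ℝ :=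
  if h : ∃ f : A →ₗ[ℝ] ℝ, LinearMap.ker f = H then h.choose else 0

lemma fH_ker {H : Submodule ℝ A} (hH : IsCoatom H) : LinearMap.ker (fH H) = H := by
  rw [fH, dif_pos (exists_ker_eq hH)]
  exact (exists_ker_eq hH).choose_spec

lemma fH_zero_iff {H : Submodule ℝ A} (hH : IsCoatom H) (x : A) :
    fH H x = 0 ↔ x ∈ H := by
  conv_rhs => rw [← fH_ker hH]
  exact Iff.rfl


section Aux15

variable {𝒜 : RealArr A}

/-- basepoint of a chamber -/
def cpt (C : Chamber 𝒜) : A := C.2.choose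

lemma cpt_mem_cmpl (C : Chamber 𝒜) : cpt C ∈ cmpl 𝒜 := C.2.choose_spec.1

lemma chamber_eq_comp (C : Chamber 𝒜) :
    C.1 = connectedComponentIn (cmpl 𝒜) (cpt C) := C.2.choose_spec.2

lemma coatom_of_mem {H : Submodule ℝ A} (hH : H ∈ 𝒜.hyps) : IsCoatom H := 𝒜.coatoms H hH

/-- the stratum of the subspace `B` -/
def strat (𝒜 : RealArr A) (B : Submodule ℝ A) : Set A :=
  {y : A | y ∈ B ∧ ∀ H ∈ 𝒜.hyps, ¬ B ≤ H → y ∉ H}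

lemma comp_strat_eq (B : Submodule ℝ A) {x : A} (hx : x ∈ strat 𝒜 B) :
    connectedComponentIn (strat 𝒜 B) x
      = {z : A | z ∈ B ∧ ∀ H ∈ 𝒜.hyps, ¬ B ≤ H → ss (fH H z) (fH H x)} := by
  set S' : Set A := {z : A | z ∈ B ∧ ∀ H ∈ 𝒜.hyps, ¬ B ≤ H → ss (fH H z) (fH H x)} with hS'
  have hsub : S' ⊆ strat 𝒜 B := by
    rintro z ⟨hzB, hz⟩
    refine ⟨hzB, fun H hH hBH hzH => ?_⟩
    exact ss_ne_left (hz H hH hBH) ((fH_zero_iff (coatom_of_mem hH) z).mpr hzH)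
  have hxS' : x ∈ S' := by
    refine ⟨hx.1, fun H hH hBH => ss_self ?_⟩
    exact fun h0 => hx.2 H hH hBH ((fH_zero_iff (coatom_of_mem hH) x).mp h0)
  apply Set.Subset.antisymm
  · -- component ⊆ cell
    intro z hz
    have hzs : z ∈ strat 𝒜 B := connectedComponentIn_subset _ _ hz
    refine ⟨hzs.1, fun H hH hBH => ?_⟩
    by_contra hns
    have hcont : Continuous (⇑(fH H) : A → ℝ) :=
      LinearMap.continuous_of_finiteDimensional (𝕜 := ℝ) (E := A) (F' := ℝ) (fH H)
    have hconn : IsPreconnected ((fH H) '' connectedComponentIn (strat 𝒜 B) x) :=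
      (isPreconnected_connectedComponentIn (x := x) (F := strat 𝒜 B)).image (fH H)
        hcont.continuousOn
    have hznz : fH H z ≠ 0 :=
      fun h0 => hzs.2 H hH hBH ((fH_zero_iff (coatom_of_mem hH) z).mp h0)
    have hxnz : fH H x ≠ 0 :=
      fun h0 => hx.2 H hH hBH ((fH_zero_iff (coatom_of_mem hH) x).mp h0)
    have hneg : fH H z * fH H x < 0 :=
      lt_of_le_of_ne (not_lt.mp hns) (mul_ne_zero hznz hxnz)
    have hzmem : fH H z ∈ (fH H) '' connectedComponentIn (strat 𝒜 B) x := ⟨z, hz, rfl⟩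
    have hxmem : fH H x ∈ (fH H) '' connectedComponentIn (strat 𝒜 B) x :=
      ⟨x, mem_connectedComponentIn hx, rfl⟩
    have h0mem : (0:ℝ) ∈ (fH H) '' connectedComponentIn (strat 𝒜 B) x := by
      rcases mul_neg_iff.mp hneg with ⟨h1, h2⟩ | ⟨h1, h2⟩
      · exact hconn.Icc_subset hxmem hzmem ⟨le_of_lt h2, le_of_lt h1⟩
      · exact hconn.Icc_subset hzmem hxmem ⟨le_of_lt h1, le_of_lt h2⟩
    obtain ⟨w, hw, hw0⟩ := h0mem
    have hws : w ∈ strat 𝒜 B := connectedComponentIn_subset _ _ hw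
    exact hws.2 H hH hBH ((fH_zero_iff (coatom_of_mem hH) w).mp hw0)
  · -- cell ⊆ component
    have hconv : Convex ℝ S' := by
      rintro z1 ⟨h1B, h1⟩ z2 ⟨h2B, h2⟩ a b ha hb hab
      refine ⟨B.add_mem (B.smul_mem a h1B) (B.smul_mem b h2B), fun H hH hBH => ?_⟩
      have t1 := h1 H hH hBH
      have t2 := h2 H hH hBH
      have hval : fH H (a • z1 + b • z2) * fH H x
          = a * (fH H z1 * fH H x) + b * (fH H z2 * fH H x) := by
        simp [map_add, map_smul, smul_eq_mul]; ring
      unfold ss at *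
      rw [hval]
      rcases eq_or_lt_of_le ha with h | h
      · have hb1 : b = 1 := by rw [← h, zero_add] at hab; exact hab
        rw [← h, hb1]; simpa using t2
      · exact add_pos_of_pos_of_nonneg (mul_pos h t1) (mul_nonneg hb t2.le)
    exact hconv.isPreconnected.subset_connectedComponentIn hxS' hsub

lemma cmpl_eq_strat : cmpl 𝒜 = strat 𝒜 ⊤ := by
  ext x
  constructor
  · exact fun h => ⟨trivial, fun H hH _ => h H hH⟩
  · exact fun h H hH => h.2 H hH (fun hle => (coatom_of_mem hH).1 (top_le_iff.mp hle))

lemma chamber_mem_iff (C : Chamber 𝒜) (z : A) :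
    z ∈ C.1 ↔ ∀ H ∈ 𝒜.hyps, ss (fH H z) (fH H (cpt C)) := by
  have hx : cpt C ∈ strat 𝒜 ⊤ := by
    rw [← cmpl_eq_strat]; exact cpt_mem_cmpl C
  rw [chamber_eq_comp, cmpl_eq_strat, comp_strat_eq (𝒜 := 𝒜) (⊤ : Submodule ℝ A) hx]
  constructor
  · rintro ⟨-, h⟩ H hH
    exact h H hH (fun hle => (coatom_of_mem hH).1 (top_le_iff.mp hle))
  · exact fun h => ⟨trivial, fun H hH _ => h H hH⟩

lemma cpt_mem (C : Chamber 𝒜) : cpt C ∈ C.1 :=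
  (chamber_eq_comp C) ▸ mem_connectedComponentIn (cpt_mem_cmpl C)

lemma cpt_ne {C : Chamber 𝒜} {H : Submodule ℝ A} (hH : H ∈ 𝒜.hyps) :
    fH H (cpt C) ≠ 0 :=
  fun h0 => cpt_mem_cmpl C H hH ((fH_zero_iff (coatom_of_mem hH) _).mp h0)

lemma mem_sign {C : Chamber 𝒜} {z : A} (hz : z ∈ C.1) {H : Submodule ℝ A}
    (hH : H ∈ 𝒜.hyps) : ss (fH H z) (fH H (cpt C)) :=
  (chamber_mem_iff C z).mp hz H hH

lemma chamber_eq_of_mem {C D : Chamber 𝒜} {z : A} (hC : z ∈ C.1) (hD : z ∈ D.1) :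
    C = D := by
  apply Subtype.ext
  rw [chamber_eq_comp C, chamber_eq_comp D] at *
  rw [connectedComponentIn_eq hC, connectedComponentIn_eq hD]

/-- the chamber of a point of the complement -/
def chamberOf (z : A) (hz : z ∈ cmpl 𝒜) : Chamber 𝒜 :=
  ⟨connectedComponentIn (cmpl 𝒜) z, z, hz, rfl⟩

lemma mem_chamberOf {z : A} (hz : z ∈ cmpl 𝒜) : z ∈ (chamberOf z hz).1 :=
  mem_connectedComponentIn hz

lemma mem_cmpl_of_ne {z : A} (h : ∀ H ∈ 𝒜.hyps, fH H z ≠ 0) : z ∈ cmpl 𝒜 :=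
  fun H hH hz => h H hH ((fH_zero_iff (coatom_of_mem hH) z).mpr hz)

lemma separates_iff {C D : Chamber 𝒜} {H : Submodule ℝ A} (hH : H ∈ 𝒜.hyps) :
    Separates H C.1 D.1 ↔ ¬ ss (fH H (cpt C)) (fH H (cpt D)) := by
  constructor
  · rintro ⟨g, hker, hpos, hneg⟩ hss
    -- proportionality
    have hfne : fH H ≠ 0 := by
      intro h0
      exact (coatom_of_mem hH).1 (by rw [← fH_ker (coatom_of_mem hH), h0]; simp)
    obtain ⟨v, hv⟩ : ∃ v, fH H v ≠ 0 := by
      by_contra h; push_neg at h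
      exact hfne (LinearMap.ext fun x => by simp [h x])
    have hprop : ∀ x : A, fH H v * g x = fH H x * g v := by
      intro x
      have hw : fH H ((fH H v) • x - (fH H x) • v) = 0 := by
        simp [map_sub, map_smul, smul_eq_mul]; ring
      have hwH : (fH H v) • x - (fH H x) • v ∈ H :=
        (fH_zero_iff (coatom_of_mem hH) _).mp hw
      have : g ((fH H v) • x - (fH H x) • v) = 0 := by
        have hmem : (fH H v) • x - (fH H x) • v ∈ LinearMap.ker g := by
          rw [hker]; exact hwH
        exact LinearMap.mem_ker.mp hmem
      simp only [map_sub, map_smul, smul_eq_mul, sub_eq_zero] at this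
      exact this
    have hgC : 0 < g (cpt C) := hpos _ (cpt_mem C)
    have hgD : g (cpt D) < 0 := hneg _ (cpt_mem D)
    have h1 := hprop (cpt C)
    have h2 := hprop (cpt D)
    have hgv : g v ≠ 0 := by
      intro h0
      rw [h0, mul_zero] at h1
      have : fH H v * g (cpt C) = 0 := h1
      rcases mul_eq_zero.mp this with h | h
      · exact hv h
      · exact (ne_of_gt hgC) h
    have e : (fH H v * g (cpt C)) * (fH H v * g (cpt D))
        = (fH H (cpt C) * g v) * (fH H (cpt D) * g v) := by rw [h1, h2]
    have hcd : g (cpt C) * g (cpt D) < 0 := mul_neg_of_pos_of_neg hgC hgD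
    have hL : (fH H v * g (cpt C)) * (fH H v * g (cpt D)) < 0 := by
      nlinarith [mul_self_pos.mpr hv]
    have hR : 0 < (fH H (cpt C) * g v) * (fH H (cpt D) * g v) := by
      unfold ss at hss
      nlinarith [mul_self_pos.mpr hgv]
    linarith [e ▸ hL]
  · intro hss
    have hC := cpt_ne (C := C) hH
    have hD := cpt_ne (C := D) hH
    have hneg : fH H (cpt C) * fH H (cpt D) < 0 :=
      lt_of_le_of_ne (not_lt.mp hss) (mul_ne_zero hC hD)
    rcases mul_neg_iff.mp hneg with ⟨h1, h2⟩ | ⟨h1, h2⟩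
    · refine ⟨fH H, fH_ker (coatom_of_mem hH), fun x hx => ?_, fun y hy => ?_⟩
      · have := mem_sign hx hH; unfold ss at this; nlinarith
      · have := mem_sign hy hH; unfold ss at this; nlinarith
    · have hker' : LinearMap.ker (-(fH H)) = H := by
        ext x
        simp only [LinearMap.mem_ker, LinearMap.neg_apply, neg_eq_zero]
        exact fH_zero_iff (coatom_of_mem hH) x
      refine ⟨-(fH H), hker', fun x hx => ?_, fun y hy => ?_⟩
      · have := mem_sign hx hH; simp only [LinearMap.neg_apply]
        unfold ss at this; nlinarith
      · have := mem_sign hy hH; simp only [LinearMap.neg_apply]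
        unfold ss at this; nlinarith

end Aux15

section Aux15b

variable {𝒜 : RealArr A}

/-- separating hyperplanes -/
def SepF (x y : Chamber 𝒜) : Finset (Submodule ℝ A) :=
  𝒜.hyps.filter fun H => ¬ ss (fH H (cpt x)) (fH H (cpt y))

lemma sepF_comm (x y : Chamber 𝒜) : SepF x y = SepF y x := by
  unfold SepF
  exact Finset.filter_congr fun H _ => by rw [ss_comm]

lemma sepF_self (x : Chamber 𝒜) : SepF x x = ∅ := by
  unfold SepF
  rw [Finset.filter_eq_empty_iff]
  exact fun H hH h => h (ss_self (cpt_ne hH))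

lemma eq_of_sepF_empty {x y : Chamber 𝒜} (h : SepF x y = ∅) : x = y := by
  refine chamber_eq_of_mem (cpt_mem x) ?_
  rw [chamber_mem_iff]
  intro H hH
  by_contra hss
  have hmem : H ∈ SepF x y := Finset.mem_filter.mpr ⟨hH, hss⟩
  rw [h] at hmem
  exact absurd hmem (Finset.notMem_empty H)

lemma sepF_triangle (x w y : Chamber 𝒜) : SepF x y ⊆ SepF x w ∪ SepF w y := by
  intro H hHm
  rw [SepF, Finset.mem_filter] at hHm
  rw [Finset.mem_union, SepF, SepF, Finset.mem_filter, Finset.mem_filter]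
  by_contra hc
  push_neg at hc
  exact hHm.2 (ss_trans (hc.1 hHm.1) (hc.2 hHm.1))

lemma sepF_adj {x w : Chamber 𝒜} (h : Adj 𝒜 x w) : (SepF x w).card = 1 := by
  obtain ⟨H₀, ⟨hH₀, hsep⟩, huniq⟩ := h
  have : SepF x w = {H₀} := by
    apply Finset.eq_singleton_iff_unique_mem.mpr
    constructor
    · exact Finset.mem_filter.mpr ⟨hH₀, (separates_iff hH₀).mp hsep⟩
    · intro H hHm
      rw [SepF, Finset.mem_filter] at hHm
      exact huniq H ⟨hHm.1, (separates_iff hHm.1).mpr hHm.2⟩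
  rw [this]; rfl

lemma sepF_card_le_length : ∀ {x y : Chamber 𝒜} (p : Path 𝒜 x y),
    (SepF x y).card ≤ p.length := by
  intro x y p
  induction p with
  | nil z => simp [sepF_self, Path.length]
  | @cons x w y s p ih =>
      have hadj : (SepF x w).card = 1 := by
        cases s with
        | pos h => exact sepF_adj h
        | neg h => rw [sepF_comm]; exact sepF_adj h
      calc (SepF x y).card ≤ (SepF x w ∪ SepF w y).card :=
            Finset.card_le_card (sepF_triangle x w y)
        _ ≤ (SepF x w).card + (SepF w y).card := Finset.card_union_le _ _
        _ ≤ 1 + p.length := by rw [hadj]; exact Nat.add_le_add_left ih 1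
        _ = p.length + 1 := by omega

lemma minimal_of_length_eq {x y : Chamber 𝒜} {p : Path 𝒜 x y}
    (h : p.length = (SepF x y).card) : p.Minimal :=
  fun q => h ▸ sepF_card_le_length q

lemma length_comp : ∀ {x y z : Chamber 𝒜} (p : Path 𝒜 x y) (q : Path 𝒜 y z),
    (p.comp q).length = p.length + q.length := by
  intro x y z p q
  induction p with
  | nil _ => simp [Path.comp, Path.length]
  | cons s p ih => simp [Path.comp, Path.length, ih]; omega

lemma positive_comp : ∀ {x y z : Chamber 𝒜} {p : Path 𝒜 x y} {q : Path 𝒜 y z},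
    p.Positive → q.Positive → (p.comp q).Positive := by
  intro x y z p q hp hq
  induction p with
  | nil _ => exact hq
  | cons s p ih =>
      cases s with
      | pos h => exact ih hp hq
      | neg h => exact hp.elim

end Aux15b

section Aux15c

/-- a nonempty open set avoids finitely many proper affine subspaces -/
lemma avoid {V : Type*} [NormedAddCommGroup V] [NormedSpace ℝ V]
    {U : Set V} (hUo : IsOpen U) (hne : U.Nonempty) (u : V)
    (T : Finset (Submodule ℝ V)) (hT : ∀ W ∈ T, W ≠ ⊤) (hcl : ∀ W ∈ T, IsClosed (W : Set V)) :
    ∃ w ∈ U, ∀ W ∈ T, w - u ∉ W := by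
  classical
  induction T using Finset.induction_on with
  | empty => exact ⟨hne.choose, hne.choose_spec, by simp⟩
  | @insert W T hWT ih =>
      obtain ⟨w₀, hw₀U, hw₀T⟩ := ih (fun W' hW' => hT W' (Finset.mem_insert_of_mem hW'))
        (fun W' hW' => hcl W' (Finset.mem_insert_of_mem hW'))
      -- the set U' of points of U avoiding the translates over T is open
      set U' : Set V := U ∩ ⋂ W' ∈ T, {w : V | w - u ∉ W'} with hU'
      have hU'o : IsOpen U' := by
        apply hUo.inter
        apply isOpen_biInter_finset
        intro W' hW'
        have : {w : V | w - u ∉ W'} = (fun w : V => w - u) ⁻¹' ((W' : Set V)ᶜ) := rfl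
        rw [this]
        exact ((hcl W' (Finset.mem_insert_of_mem hW')).isOpen_compl).preimage
          (continuous_id.sub continuous_const)
      have hw₀U' : w₀ ∈ U' := by
        refine ⟨hw₀U, ?_⟩
        simp only [Set.mem_iInter]
        exact fun W' hW' => hw₀T W' hW'
      -- find a point of U' outside the translate of W
      by_cases hall : ∀ w ∈ U', w - u ∈ W
      · exfalso
        apply hT W (Finset.mem_insert_self W T)
        obtain ⟨ε, hε, hball⟩ := Metric.isOpen_iff.mp hU'o w₀ hw₀U'
        rw [eq_top_iff]
        intro x _
        rcases eq_or_ne x 0 with rfl | hx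
        · exact W.zero_mem
        · have hxx : w₀ + (ε / (2 * ‖x‖)) • x ∈ U' := by
            apply hball
            rw [Metric.mem_ball, dist_eq_norm]
            have hnx : ‖x‖ > 0 := norm_pos_iff.mpr hx
            have : ‖w₀ + (ε / (2 * ‖x‖)) • x - w₀‖ = (ε / (2 * ‖x‖)) * ‖x‖ := by
              rw [add_sub_cancel_left, norm_smul, Real.norm_eq_abs, abs_of_pos (by positivity)]
            rw [this]
            rw [div_mul_eq_mul_div, mul_comm]
            rw [div_lt_iff₀ (by positivity)]
            nlinarith
          have h1 := hall _ hxx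
          have h2 := hall _ hw₀U'
          have h3 : (ε / (2 * ‖x‖)) • x ∈ W := by
            have := W.sub_mem h1 h2
            simpa using this
          have hnx : ‖x‖ > 0 := norm_pos_iff.mpr hx
          have hc : (ε / (2 * ‖x‖)) ≠ 0 := by positivity
          have := W.smul_mem (ε / (2 * ‖x‖))⁻¹ h3
          rwa [inv_smul_smul₀ hc] at this
      · push_neg at hall
        obtain ⟨w, hwU', hwW⟩ := hall
        refine ⟨w, hwU'.1, ?_⟩
        intro W' hW'
        rcases Finset.mem_insert.mp hW' with rfl | hW'
        · exact hwW
        · exact (Set.mem_iInter₂.mp hwU'.2) W' hW'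

/-- choose a uniform small ε for finitely many sign conditions -/
lemma exists_eps {J : Type*} (T : Finset J) (α β : J → ℝ) (hα : ∀ j ∈ T, α j ≠ 0) :
    ∃ ε : ℝ, 0 < ε ∧ ∀ ε' : ℝ, 0 < ε' → ε' ≤ ε → ∀ j ∈ T, ss (α j + ε' * β j) (α j) := by
  classical
  rcases T.eq_empty_or_nonempty with rfl | hTe
  · exact ⟨1, one_pos, by simp⟩
  · refine ⟨T.inf' hTe (fun j => |α j| / (|β j| + 1)), ?_, ?_⟩
    · rw [Finset.lt_inf'_iff]
      intro j hj
      exact div_pos (abs_pos.mpr (hα j hj)) (by positivity)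
    · intro ε' hε'0 hε'le j hj
      have hle : ε' ≤ |α j| / (|β j| + 1) := le_trans hε'le (Finset.inf'_le _ hj)
      have h2 : ε' * (|β j| + 1) ≤ |α j| := by
        rw [← le_div_iff₀ (by positivity)]; exact hle
      have h1 : ε' * |β j| < |α j| := by nlinarith [abs_nonneg (β j)]
      have habs : |ε' * β j| < |α j| := by
        rw [abs_mul, abs_of_pos hε'0]; exact h1
      rcases (hα j hj).lt_or_gt with hneg | hpos
      · have h4 : |ε' * β j| < -α j := by rwa [abs_of_neg hneg] at habs
        have h5 : ε' * β j ≤ |ε' * β j| := le_abs_self _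
        have : α j + ε' * β j < 0 := by linarith
        exact mul_pos_of_neg_of_neg this hneg
      · have h4 : |ε' * β j| < α j := by rwa [abs_of_pos hpos] at habs
        have h5 : -|ε' * β j| ≤ ε' * β j := neg_abs_le _
        have : 0 < α j + ε' * β j := by linarith
        exact mul_pos this hpos

end Aux15c

section Aux15d

lemma absStep {V : Type*} [NormedAddCommGroup V] [NormedSpace ℝ V] [FiniteDimensional ℝ V]
    {J : Type*} (S : Finset J) (g : J → (V →ₗ[ℝ] ℝ))
    (u w₀ : V) (U : Set V) (hUo : IsOpen U) (hw₀ : w₀ ∈ U)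
    (hu : ∀ j ∈ S, g j u ≠ 0) (hw₀nz : ∀ j ∈ S, g j w₀ ≠ 0)
    (hUs : ∀ w ∈ U, ∀ j ∈ S, ss (g j w) (g j w₀))
    (hD : (S.filter fun j => ¬ ss (g j u) (g j w₀)).Nonempty) :
    ∃ (z₁ z₂ : V) (W : Finset J),
      W ⊆ S.filter (fun j => ¬ ss (g j u) (g j w₀)) ∧ W.Nonempty ∧
      (∀ j ∈ W, g j z₁ = 0) ∧
      (∀ j ∈ S, j ∉ W → ss (g j z₁) (g j u)) ∧
      (∀ j ∈ S, j ∉ W → ss (g j z₂) (g j u)) ∧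
      (∀ j ∈ W, ¬ ss (g j z₂) (g j u)) ∧
      (∀ j ∈ W, ss (g j z₂) (g j w₀)) ∧
      (∀ j ∈ W, ∀ j' ∈ W,
        (LinearMap.ker (g j) ⊓ LinearMap.ker (g j')) ⊔ Submodule.span ℝ {u} = ⊤) := by
  classical
  set D := S.filter (fun j => ¬ ss (g j u) (g j w₀)) with hDdef
  set T : Finset (Submodule ℝ V) :=
    ((S ×ˢ S).filter fun jj =>
      ((LinearMap.ker (g jj.1) ⊓ LinearMap.ker (g jj.2)) ⊔ Submodule.span ℝ {u}) ≠ ⊤).image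
      (fun jj => (LinearMap.ker (g jj.1) ⊓ LinearMap.ker (g jj.2)) ⊔ Submodule.span ℝ {u})
    with hTdef
  have hT : ∀ W ∈ T, W ≠ ⊤ := by
    intro W hW
    obtain ⟨jj, hjj, rfl⟩ := Finset.mem_image.mp hW
    exact (Finset.mem_filter.mp hjj).2
  have hTcl : ∀ W ∈ T, IsClosed (W : Set V) := fun W _ => W.closed_of_finiteDimensional
  obtain ⟨w, hwU, hwT⟩ := avoid hUo ⟨w₀, hw₀⟩ u T hT hTcl
  have hws : ∀ j ∈ S, ss (g j w) (g j w₀) := hUs w hwU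
  have hwnz : ∀ j ∈ S, g j w ≠ 0 := fun j hj => ss_ne_left (hws j hj)
  set t : J → ℝ := fun j => g j u / (g j u - g j w) with htdef
  set γ : ℝ → V := fun s => u + s • (w - u) with hγdef
  have hγval : ∀ (j : J) (s : ℝ), g j (γ s) = g j u + s * (g j w - g j u) := by
    intro j s
    simp only [γ, map_add, map_smul, map_sub, smul_eq_mul]
  have hpair : ∀ j ∈ S, ∀ j' ∈ S, ∀ s : ℝ, 0 < s →
      g j (γ s) = 0 → g j' (γ s) = 0 →
      (LinearMap.ker (g j) ⊓ LinearMap.ker (g j')) ⊔ Submodule.span ℝ {u} = ⊤ := by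
    intro j hj j' hj' s hs h1 h2
    by_contra hne
    have hmemT : ((LinearMap.ker (g j) ⊓ LinearMap.ker (g j')) ⊔ Submodule.span ℝ {u}) ∈ T :=
      Finset.mem_image.mpr ⟨(j, j'),
        Finset.mem_filter.mpr ⟨Finset.mem_product.mpr ⟨hj, hj'⟩, hne⟩, rfl⟩
    apply hwT _ hmemT
    have hwu : w - u = s⁻¹ • (γ s - u) := by
      simp only [γ, add_sub_cancel_left]
      rw [smul_smul, inv_mul_cancel₀ (ne_of_gt hs), one_smul]
    rw [hwu]
    apply Submodule.smul_mem
    have hγmem : γ s ∈ (LinearMap.ker (g j) ⊓ LinearMap.ker (g j')) :=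
      Submodule.mem_inf.mpr ⟨LinearMap.mem_ker.mpr h1, LinearMap.mem_ker.mpr h2⟩
    exact Submodule.sub_mem _ (Submodule.mem_sup_left hγmem)
      (Submodule.mem_sup_right (Submodule.mem_span_singleton_self u))
  -- formula for the value along the segment
  have hmtall : ∀ j : J, g j u - g j w ≠ 0 → (g j u - g j w) * t j = g j u := by
    intro j hne
    rw [htdef]
    field_simp
  have hform : ∀ j : J, g j u - g j w ≠ 0 → ∀ s : ℝ,
      g j (γ s) = (g j u - g j w) * (t j - s) := by
    intro j hne s
    rw [hγval]
    linear_combination (-1 : ℝ) * hmtall j hne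
  -- properties of crossing times for separating indices
  have hDprops : ∀ j ∈ D, (g j u - g j w ≠ 0) ∧ 0 < t j ∧ t j < 1 := by
    intro j hjD
    have hjS : j ∈ S := Finset.mem_filter.mp hjD |>.1
    have hnss : ¬ ss (g j u) (g j w) := by
      intro hss
      exact (Finset.mem_filter.mp hjD).2 (ss_trans hss (hws j hjS))
    have hab : g j u * g j w < 0 :=
      lt_of_le_of_ne (not_lt.mp hnss) (mul_ne_zero (hu j hjS) (hwnz j hjS))
    have hne : g j u - g j w ≠ 0 := by
      intro h0
      have heq : g j u = g j w := sub_eq_zero.mp h0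
      rw [heq] at hab
      exact absurd hab (not_lt.mpr (mul_self_nonneg (g j w)))
    refine ⟨hne, ?_, ?_⟩
    · have h5 : 0 < g j u * (g j u - g j w) := by
        nlinarith [mul_self_nonneg (g j u)]
      rcases mul_pos_iff.mp h5 with ⟨h6, h7⟩ | ⟨h6, h7⟩
      · exact div_pos h6 h7
      · exact div_pos_of_neg_of_neg h6 h7
    · have hmt : (g j u - g j w) * (1 - t j) = -(g j w) := by
        linear_combination (-1 : ℝ) * hmtall j hne
      have h5 : 0 < (-(g j w)) * (g j u - g j w) := by
        nlinarith [mul_self_nonneg (g j w)]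
      have e6 : (1 - t j) * ((g j u - g j w) * (g j u - g j w))
          = (-(g j w)) * (g j u - g j w) := by
        linear_combination (g j u - g j w) * hmt
      have h6 : 0 < (1 - t j) * ((g j u - g j w) * (g j u - g j w)) := by
        rw [e6]; exact h5
      have h7 : 0 < (g j u - g j w) * (g j u - g j w) := mul_self_pos.mpr hne
      by_contra hc
      push_neg at hc
      nlinarith [mul_nonpos_of_nonpos_of_nonneg (by linarith : 1 - t j ≤ 0) h7.le]
  -- for non-separating indices with nonzero slope: t j * (t j - 1) > 0
  have hSDprops : ∀ j ∈ S, j ∉ D → g j u - g j w ≠ 0 → 0 < t j * (t j - 1) := by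
    intro j hjS hjD hne
    have hss : ss (g j u) (g j w) := by
      have h1 : ss (g j u) (g j w₀) := by
        by_contra hc
        exact hjD (Finset.mem_filter.mpr ⟨hjS, hc⟩)
      exact ss_trans h1 (ss_symm (hws j hjS))
    have hmt : (g j u - g j w) * t j = g j u := hmtall j hne
    have hbt : (g j u - g j w) * (t j - 1) = g j w := by
      linear_combination hmt
    have hab : 0 < g j u * g j w := hss
    have h7 : 0 < (g j u - g j w) * (g j u - g j w) := mul_self_pos.mpr hne
    have e : g j u * g j w
        = ((g j u - g j w) * (g j u - g j w)) * (t j * (t j - 1)) := by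
      linear_combination (-(g j w)) * hmt - ((g j u - g j w) * t j) * hbt
    by_contra hc
    push_neg at hc
    nlinarith [mul_nonpos_of_nonneg_of_nonpos h7.le hc]
  -- minimum crossing time
  obtain ⟨j₁, hj₁D, hj₁min⟩ := Finset.exists_min_image D t hD
  obtain ⟨hj₁ne, hj₁0, hj₁1⟩ := hDprops j₁ hj₁D
  set z₁ := γ (t j₁) with hz₁def
  set W := D.filter (fun j => g j z₁ = 0) with hWdef
  have hj₁W : j₁ ∈ W := by
    refine Finset.mem_filter.mpr ⟨hj₁D, ?_⟩
    rw [hz₁def, hform j₁ hj₁ne]; ring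
  have hWD : W ⊆ D := Finset.filter_subset _ _
  have hWzero : ∀ j ∈ W, g j z₁ = 0 := fun j hj => (Finset.mem_filter.mp hj).2
  have hWt : ∀ j ∈ W, t j = t j₁ := by
    intro j hjW
    have hjD := hWD hjW
    obtain ⟨hne, -, -⟩ := hDprops j hjD
    have h0 := hWzero j hjW
    rw [hz₁def, hform j hne] at h0
    rcases mul_eq_zero.mp h0 with h | h
    · exact absurd h hne
    · linarith [sub_eq_zero.mp h]
  -- next crossing time bound
  set E := D.filter (fun j => t j₁ < t j) with hEdef
  set M : Finset ℝ := insert (1:ℝ) (E.image t) with hMdef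
  have hMne : M.Nonempty := ⟨1, Finset.mem_insert_self 1 _⟩
  set m := M.min' hMne with hmdef
  have hm : t j₁ < m := by
    rw [Finset.lt_min'_iff]
    intro r hr
    rcases Finset.mem_insert.mp hr with rfl | hr
    · exact hj₁1
    · obtain ⟨j, hjE, rfl⟩ := Finset.mem_image.mp hr
      exact (Finset.mem_filter.mp hjE).2
  have hm1 : m ≤ 1 := Finset.min'_le _ _ (Finset.mem_insert_self 1 _)
  set s₀ := (t j₁ + m) / 2 with hs₀def
  have hs₀l : t j₁ < s₀ := by rw [hs₀def]; linarith
  have hs₀r : s₀ < m := by rw [hs₀def]; linarith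
  have hs₀0 : 0 < s₀ := lt_trans hj₁0 hs₀l
  have hs₀1 : s₀ < 1 := lt_of_lt_of_le hs₀r hm1
  set z₂ := γ s₀ with hz₂def
  -- late indices: t j > s₀ for j ∈ D \ W
  have hlate : ∀ j ∈ D, j ∉ W → s₀ < t j ∧ t j₁ < t j := by
    intro j hjD hjW
    obtain ⟨hne, -, -⟩ := hDprops j hjD
    have hnz : g j z₁ ≠ 0 := fun h0 => hjW (Finset.mem_filter.mpr ⟨hjD, h0⟩)
    have htne : t j ≠ t j₁ := by
      intro he
      apply hnz
      rw [hz₁def, hform j hne, he]; ring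
    have htgt : t j₁ < t j := lt_of_le_of_ne (hj₁min j hjD) (Ne.symm htne)
    have hjE : j ∈ E := Finset.mem_filter.mpr ⟨hjD, htgt⟩
    have : m ≤ t j := Finset.min'_le _ _ (Finset.mem_insert_of_mem (Finset.mem_image_of_mem t hjE))
    exact ⟨lt_of_lt_of_le hs₀r this, htgt⟩
  -- sign facts away from W
  have hsign : ∀ j ∈ S, j ∉ W → ∀ s : ℝ, 0 < s → s < 1 → s < t j ∨ j ∉ D →
      ss (g j (γ s)) (g j u) := by
    intro j hjS hjW s hs0 hs1 hcase
    by_cases hjD : j ∈ D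
    · obtain ⟨hne, ht0, ht1⟩ := hDprops j hjD
      have hst : s < t j := by
        rcases hcase with h | h
        · exact h
        · exact absurd hjD h
      rw [hform j hne]
      have h7 : 0 < (g j u - g j w) * (g j u - g j w) := mul_self_pos.mpr hne
      have hmt : (g j u - g j w) * t j = g j u := hmtall j hne
      have e : (g j u - g j w) * (t j - s) * (g j u)
          = ((g j u - g j w) * (g j u - g j w)) * (t j * (t j - s)) := by
        linear_combination (-((g j u - g j w) * (t j - s))) * hmt
      unfold ss
      rw [e]
      exact mul_pos h7 (mul_pos ht0 (sub_pos.mpr hst))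
    · by_cases hne : g j u - g j w = 0
      · have : g j (γ s) = g j u := by
          rw [hγval]
          have : g j w = g j u := by linarith [sub_eq_zero.mp hne]
          rw [this]; ring
        rw [this]
        exact ss_self (hu j hjS)
      · have htt := hSDprops j hjS hjD hne
        rw [hform j hne]
        have h7 : 0 < (g j u - g j w) * (g j u - g j w) := mul_self_pos.mpr hne
        have hmt : (g j u - g j w) * t j = g j u := hmtall j hne
        have e : (g j u - g j w) * (t j - s) * (g j u)
            = ((g j u - g j w) * (g j u - g j w)) * (t j * (t j - s)) := by
          linear_combination (-((g j u - g j w) * (t j - s))) * hmt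
        unfold ss
        rw [e]
        rcases mul_pos_iff.mp htt with ⟨h8, h9⟩ | ⟨h8, h9⟩
        · exact mul_pos h7 (mul_pos h8 (sub_pos.mpr (lt_trans hs1 (by linarith))))
        · exact mul_pos h7 (mul_pos_of_neg_of_neg h8 (by linarith))
  refine ⟨z₁, z₂, W, hWD, ⟨j₁, hj₁W⟩, hWzero, ?_, ?_, ?_, ?_, ?_⟩
  · -- signs of z₁ away from W
    intro j hjS hjW
    apply hsign j hjS hjW (t j₁) hj₁0 hj₁1
    by_cases hjD : j ∈ D
    · exact Or.inl (hlate j hjD hjW).2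
    · exact Or.inr hjD
  · -- signs of z₂ away from W
    intro j hjS hjW
    apply hsign j hjS hjW s₀ hs₀0 hs₀1
    by_cases hjD : j ∈ D
    · exact Or.inl (hlate j hjD hjW).1
    · exact Or.inr hjD
  · -- z₂ flipped on W
    intro j hjW
    have hjD := hWD hjW
    obtain ⟨hne, ht0, ht1⟩ := hDprops j hjD
    have htj := hWt j hjW
    rw [hz₂def, hform j hne, htj]
    have h7 : 0 < (g j u - g j w) * (g j u - g j w) := mul_self_pos.mpr hne
    have hmt : (g j u - g j w) * t j = g j u := hmtall j hne
    rw [htj] at hmt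
    have e : (g j u - g j w) * (t j₁ - s₀) * (g j u)
        = ((g j u - g j w) * (g j u - g j w)) * (t j₁ * (t j₁ - s₀)) := by
      linear_combination (-((g j u - g j w) * (t j₁ - s₀))) * hmt
    intro hss
    unfold ss at hss
    rw [e] at hss
    have hneg : ((g j u - g j w) * (g j u - g j w)) * (t j₁ * (t j₁ - s₀)) < 0 :=
      mul_neg_of_pos_of_neg h7 (mul_neg_of_pos_of_neg hj₁0 (by linarith))
    linarith
  · -- z₂ on the w₀ side on W
    intro j hjW
    have hjD := hWD hjW
    have hjS : j ∈ S := (Finset.mem_filter.mp hjD).1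
    obtain ⟨hne, ht0, ht1⟩ := hDprops j hjD
    have htj := hWt j hjW
    have hss2 : ss (g j z₂) (g j w) := by
      rw [hz₂def, hform j hne, htj]
      have h7 : 0 < (g j u - g j w) * (g j u - g j w) := mul_self_pos.mpr hne
      have hbt : (g j u - g j w) * (t j - 1) = g j w := by
        linear_combination hmtall j hne
      rw [htj] at hbt
      have e : (g j u - g j w) * (t j₁ - s₀) * (g j w)
          = ((g j u - g j w) * (g j u - g j w)) * ((t j₁ - s₀) * (t j₁ - 1)) := by
        linear_combination (-((g j u - g j w) * (t j₁ - s₀))) * hbt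
      unfold ss
      rw [e]
      exact mul_pos h7 (mul_pos_of_neg_of_neg (by linarith) (by linarith))
    exact ss_trans hss2 (hws j hjS)
  · -- pairs in W
    intro j hjW j' hj'W
    exact hpair j ((Finset.mem_filter.mp (hWD hjW)).1) j' ((Finset.mem_filter.mp (hWD hj'W)).1)
      (t j₁) hj₁0 (hWzero j hjW) (hWzero j' hj'W)

end Aux15d

section Aux15e

variable {𝒜 : RealArr A}

lemma chamber_open (y : Chamber 𝒜) : IsOpen y.1 := by
  have hrw : y.1 = ⋂ H ∈ 𝒜.hyps, {z : A | ss (fH H z) (fH H (cpt y))} := by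
    ext z; simp only [Set.mem_iInter, Set.mem_setOf_eq]
    exact chamber_mem_iff y z
  rw [hrw]
  apply isOpen_biInter_finset
  intro H hH
  have hcont : Continuous (fun z : A => fH H z * fH H (cpt y)) :=
    (LinearMap.continuous_of_finiteDimensional (fH H)).mul continuous_const
  have hrw2 : {z : A | ss (fH H z) (fH H (cpt y))}
      = (fun z : A => fH H z * fH H (cpt y)) ⁻¹' (Set.Ioi 0) := rfl
  rw [hrw2]
  exact isOpen_Ioi.preimage hcont

lemma hyp_finrank {H : Submodule ℝ A} (hH : H ∈ 𝒜.hyps) :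
    Module.finrank ℝ H + 1 = Module.finrank ℝ A := by
  have hco := coatom_of_mem hH
  have hfne : fH H ≠ 0 := by
    intro h0
    exact hco.1 (by rw [← fH_ker hco, h0]; simp)
  obtain ⟨v, hv⟩ : ∃ v, fH H v ≠ 0 := by
    by_contra h; push_neg at h
    exact hfne (LinearMap.ext fun x => by simp [h x])
  have hrange : LinearMap.range (fH H) = ⊤ := by
    rw [LinearMap.range_eq_top]
    intro r
    refine ⟨(r / fH H v) • v, ?_⟩
    rw [map_smul, smul_eq_mul]
    field_simp
  have hrn := LinearMap.finrank_range_add_finrank_ker (fH H)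
  rw [hrange, fH_ker hco, finrank_top, Module.finrank_self] at hrn
  omega

lemma finrank_span_le {V : Type*} [AddCommGroup V] [Module ℝ V] (u : V) :
    Module.finrank ℝ (Submodule.span ℝ {u}) ≤ 1 := by
  rcases eq_or_ne u 0 with rfl | hu
  · rw [Submodule.span_zero_singleton]
    simp
  · rw [finrank_span_singleton hu]

lemma distinct_hyp_pair {H H' : Submodule ℝ A} (hH : H ∈ 𝒜.hyps) (hH' : H' ∈ 𝒜.hyps)
    (hne : H ≠ H') (u : A) :
    (H ⊓ H') ⊔ Submodule.span ℝ {u} ≠ ⊤ := by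
  have hsup : H ⊔ H' = ⊤ := by
    apply (coatom_of_mem hH).2
    rcases lt_or_eq_of_le (le_sup_left : H ≤ H ⊔ H') with h | h
    · exact h
    · exfalso
      have hle : H' ≤ H := by rw [h]; exact le_sup_right
      rcases lt_or_eq_of_le hle with h2 | h2
      · exact (coatom_of_mem hH).1 ((coatom_of_mem hH').2 H h2)
      · exact hne h2.symm
  have h1 := hyp_finrank hH
  have h2 := hyp_finrank hH'
  have h3 := Submodule.finrank_sup_add_finrank_inf_eq H H'
  rw [hsup, finrank_top] at h3
  have hspan := finrank_span_le u
  intro htop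
  have h4 := Submodule.finrank_sup_add_finrank_inf_eq (H ⊓ H') (Submodule.span ℝ {u})
  rw [htop, finrank_top] at h4
  have h5 : Module.finrank ℝ ↥((H ⊓ H') ⊓ Submodule.span ℝ {u}) ≤
      Module.finrank ℝ (Submodule.span ℝ {u}) :=
    Submodule.finrank_mono inf_le_right
  omega

lemma chamber_step (x y : Chamber 𝒜) (hne : (SepF x y).Nonempty) :
    ∃ (x₁ : Chamber 𝒜) (H₁ : Submodule ℝ A), Adj 𝒜 x x₁ ∧ H₁ ∈ SepF x y ∧
      SepF x₁ y = (SepF x y).erase H₁ := by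
  obtain ⟨z₁, z₂, W, hWD, hWne, hWzero, hz₁, hz₂, hz₂W, hz₂w₀, hpairs⟩ :=
    absStep 𝒜.hyps fH (cpt x) (cpt y) y.1 (chamber_open y) (cpt_mem y)
      (fun H hH => cpt_ne hH) (fun H hH => cpt_ne hH)
      (fun w hw H hH => mem_sign hw hH) hne
  obtain ⟨H₁, hH₁W⟩ := hWne
  have hWhyps : ∀ H ∈ W, H ∈ 𝒜.hyps := fun H hHW => (Finset.mem_filter.mp (hWD hHW)).1
  have hWsingle : ∀ H ∈ W, H = H₁ := by
    intro H hHW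
    by_contra hne'
    have := hpairs H hHW H₁ hH₁W
    rw [fH_ker (coatom_of_mem (hWhyps H hHW)), fH_ker (coatom_of_mem (hWhyps H₁ hH₁W))] at this
    exact distinct_hyp_pair (hWhyps H hHW) (hWhyps H₁ hH₁W) hne' (cpt x) this
  have hz₂cmpl : z₂ ∈ cmpl 𝒜 := by
    apply mem_cmpl_of_ne
    intro H hH
    by_cases hHW : H ∈ W
    · exact ss_ne_left (hz₂w₀ H hHW)
    · exact ss_ne_left (hz₂ H hH hHW)
  set x₁ := chamberOf z₂ hz₂cmpl with hx₁def
  have hx₁z : ∀ H ∈ 𝒜.hyps, ss (fH H z₂) (fH H (cpt x₁)) :=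
    fun H hH => mem_sign (mem_chamberOf hz₂cmpl) hH
  -- sign relations between x, x₁, y
  have hssW : ∀ H ∈ W, ¬ ss (fH H (cpt x)) (fH H (cpt x₁)) := by
    intro H hHW hss
    exact hz₂W H hHW (ss_trans (hx₁z H (hWhyps H hHW)) (ss_symm hss))
  have hssnW : ∀ H ∈ 𝒜.hyps, H ∉ W → ss (fH H (cpt x)) (fH H (cpt x₁)) := by
    intro H hH hHW
    exact ss_trans (ss_symm (hz₂ H hH hHW)) (hx₁z H hH)
  have hssWy : ∀ H ∈ W, ss (fH H (cpt x₁)) (fH H (cpt y)) := by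
    intro H hHW
    exact ss_trans (ss_symm (hx₁z H (hWhyps H hHW))) (hz₂w₀ H hHW)
  have hH₁hyps := hWhyps H₁ hH₁W
  have hadj : Adj 𝒜 x x₁ := by
    refine ⟨H₁, ⟨hH₁hyps, (separates_iff hH₁hyps).mpr (hssW H₁ hH₁W)⟩, ?_⟩
    rintro H ⟨hH, hsep⟩
    have hnss := (separates_iff hH).mp hsep
    by_contra hne'
    by_cases hHW : H ∈ W
    · exact hne' (hWsingle H hHW)
    · exact hnss (hssnW H hH hHW)
  refine ⟨x₁, H₁, hadj, hWD hH₁W, ?_⟩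
  -- SepF x₁ y = erase
  ext H
  rw [Finset.mem_erase]
  constructor
  · intro hmem
    have hH : H ∈ 𝒜.hyps := (Finset.mem_filter.mp hmem).1
    have hnss : ¬ ss (fH H (cpt x₁)) (fH H (cpt y)) := (Finset.mem_filter.mp hmem).2
    by_cases hHW : H ∈ W
    · exact absurd (hssWy H hHW) hnss
    · refine ⟨fun he => ?_, ?_⟩
      · exact hHW (he ▸ hH₁W)
      · refine Finset.mem_filter.mpr ⟨hH, fun hss => ?_⟩
        exact hnss (ss_trans (ss_symm (hssnW H hH hHW)) hss)
  · rintro ⟨hneH, hmem⟩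
    have hH : H ∈ 𝒜.hyps := (Finset.mem_filter.mp hmem).1
    have hnss : ¬ ss (fH H (cpt x)) (fH H (cpt y)) := (Finset.mem_filter.mp hmem).2
    have hHW : H ∉ W := fun hHW => hneH (hWsingle H hHW)
    refine Finset.mem_filter.mpr ⟨hH, fun hss => ?_⟩
    exact hnss (ss_trans (hssnW H hH hHW) hss)

lemma exists_minpos_path' : ∀ (n : ℕ) (x y : Chamber 𝒜), (SepF x y).card = n →
    ∃ p : Path 𝒜 x y, p.Positive ∧ p.length = (SepF x y).card := by
  intro n
  induction n using Nat.strong_induction_on with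
  | _ n IH =>
    intro x y hn
    rcases Finset.eq_empty_or_nonempty (SepF x y) with hemp | hne
    · have hxy : x = y := eq_of_sepF_empty hemp
      subst hxy
      exact ⟨Path.nil x, trivial, by rw [hemp]; rfl⟩
    · obtain ⟨x₁, H₁, hadj, hH₁, hsepe⟩ := chamber_step x y hne
      have hpos : 0 < (SepF x y).card := Finset.card_pos.mpr hne
      have hcard : (SepF x₁ y).card < n := by
        rw [hsepe, Finset.card_erase_of_mem hH₁]
        omega
      obtain ⟨p₁, hp₁pos, hp₁len⟩ := IH _ hcard x₁ y rfl
      refine ⟨Path.cons (Step.pos hadj) p₁, hp₁pos, ?_⟩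
      show p₁.length + 1 = (SepF x y).card
      rw [hp₁len, hsepe, Finset.card_erase_of_mem hH₁]
      omega

lemma exists_minpos_path (x y : Chamber 𝒜) :
    ∃ p : Path 𝒜 x y, p.Positive ∧ p.length = (SepF x y).card :=
  exists_minpos_path' _ x y rfl

lemma garside_length {x y : Chamber 𝒜} {p : Path 𝒜 x y} (hmin : p.Minimal) :
    p.length = (SepF x y).card := by
  obtain ⟨q, hqpos, hqlen⟩ := exists_minpos_path x y
  exact le_antisymm (hqlen ▸ hmin q) (sepF_card_le_length p)

end Aux15e

section Aux15f

variable {𝒜 : RealArr A}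

/-- basepoint of a face -/
def fpt (F : Face 𝒜) : A := F.hc.choose

lemma fpt_memB (F : Face 𝒜) : fpt F ∈ F.B := F.hc.choose_spec.1

lemma fpt_avoid (F : Face 𝒜) : ∀ H ∈ 𝒜.hyps, ¬ F.B ≤ H → fpt F ∉ H :=
  F.hc.choose_spec.2.1

lemma face_c_eq (F : Face 𝒜) :
    F.c = connectedComponentIn (strat 𝒜 F.B) (fpt F) := F.hc.choose_spec.2.2

lemma fpt_mem_strat (F : Face 𝒜) : fpt F ∈ strat 𝒜 F.B :=
  ⟨fpt_memB F, fpt_avoid F⟩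

lemma fpt_ne (F : Face 𝒜) {H : Submodule ℝ A} (hH : H ∈ 𝒜.hyps) (hBH : ¬ F.B ≤ H) :
    fH H (fpt F) ≠ 0 :=
  fun h0 => fpt_avoid F H hH hBH ((fH_zero_iff (coatom_of_mem hH) _).mp h0)

lemma face_mem_iff (F : Face 𝒜) (z : A) :
    z ∈ F.c ↔ z ∈ F.B ∧ ∀ H ∈ 𝒜.hyps, ¬ F.B ≤ H → ss (fH H z) (fH H (fpt F)) := by
  rw [face_c_eq, comp_strat_eq (𝒜 := 𝒜) F.B (fpt_mem_strat F)]
  exact Iff.rfl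

lemma fpt_mem_c (F : Face 𝒜) : fpt F ∈ F.c := by
  rw [face_c_eq]
  exact mem_connectedComponentIn (fpt_mem_strat F)

lemma mem_c_ne {F : Face 𝒜} {z : A} (hz : z ∈ F.c) {H : Submodule ℝ A}
    (hH : H ∈ 𝒜.hyps) (hBH : ¬ F.B ≤ H) : fH H z ≠ 0 :=
  ss_ne_left (((face_mem_iff F z).mp hz).2 H hH hBH)

lemma mem_c_memB {F : Face 𝒜} {z : A} (hz : z ∈ F.c) : z ∈ F.B :=
  ((face_mem_iff F z).mp hz).1

/-- vertex characterization via signs -/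
lemma vert_iff (F : Face 𝒜) (v : Chamber 𝒜) :
    F.vert v ↔ ∀ H ∈ 𝒜.hyps, ¬ F.B ≤ H → ss (fH H (fpt F)) (fH H (cpt v)) := by
  constructor
  · intro hv H hH hBH
    have hcl : fpt F ∈ closure v.1 := hv (fpt_mem_c F)
    have hsub : closure v.1 ⊆ {w : A | 0 ≤ fH H w * fH H (cpt v)} := by
      apply closure_minimal
      · intro w hw
        exact le_of_lt (mem_sign hw hH)
      · have : {w : A | 0 ≤ fH H w * fH H (cpt v)}
            = (fun w : A => fH H w * fH H (cpt v)) ⁻¹' (Set.Ici 0) := rfl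
        rw [this]
        exact isClosed_Ici.preimage
          ((LinearMap.continuous_of_finiteDimensional (fH H)).mul continuous_const)
    have h0 : 0 ≤ fH H (fpt F) * fH H (cpt v) := hsub hcl
    have hne : fH H (fpt F) * fH H (cpt v) ≠ 0 :=
      mul_ne_zero (fpt_ne F hH hBH) (cpt_ne hH)
    exact lt_of_le_of_ne h0 (Ne.symm hne)
  · intro hsgn z hz
    obtain ⟨hzB, hzsgn⟩ := (face_mem_iff F z).mp hz
    rw [mem_closure_iff]
    intro o ho hzo
    obtain ⟨ε, hε, hball⟩ := Metric.isOpen_iff.mp ho z hzo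
    obtain ⟨ε₁, hε₁, heps⟩ := exists_eps (𝒜.hyps.filter fun H => ¬ F.B ≤ H)
      (fun H => fH H z) (fun H => fH H (cpt v))
      (fun H hHm => mem_c_ne hz (Finset.mem_filter.mp hHm).1 (Finset.mem_filter.mp hHm).2)
    set c := cpt v with hcdef
    set ε' := min ε₁ (ε / (2 * (‖c‖ + 1))) with hε'def
    have hε'0 : 0 < ε' := lt_min hε₁ (by positivity)
    have hmem : z + ε' • c ∈ v.1 := by
      rw [chamber_mem_iff]
      intro H hH
      have hval : fH H (z + ε' • c) = fH H z + ε' * fH H c := by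
        rw [map_add, map_smul, smul_eq_mul]
      by_cases hBH : F.B ≤ H
      · have hz0 : fH H z = 0 := (fH_zero_iff (coatom_of_mem hH) z).mpr (hBH hzB)
        rw [hval, hz0, zero_add]
        unfold ss
        have := cpt_ne (C := v) hH
        nlinarith [mul_self_pos.mpr (cpt_ne (C := v) hH)]
      · have h1 : ss (fH H z + ε' * fH H c) (fH H z) :=
          heps ε' hε'0 (min_le_left _ _) H (Finset.mem_filter.mpr ⟨hH, hBH⟩)
        rw [hval]
        exact ss_trans h1 (ss_trans (hzsgn H hH hBH) (hsgn H hH hBH))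
    refine ⟨z + ε' • c, ?_, hmem⟩
    apply hball
    rw [Metric.mem_ball, dist_eq_norm, add_sub_cancel_left, norm_smul,
      Real.norm_eq_abs, abs_of_pos hε'0]
    have h2 : ε' ≤ ε / (2 * (‖c‖ + 1)) := min_le_right _ _
    have h3 : (0:ℝ) < ‖c‖ + 1 := by positivity
    calc ε' * ‖c‖ ≤ (ε / (2 * (‖c‖ + 1))) * ‖c‖ :=
          mul_le_mul_of_nonneg_right h2 (norm_nonneg c)
      _ < ε := by
          rw [div_mul_eq_mul_div, div_lt_iff₀ (by positivity)]
          nlinarith [norm_nonneg c]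

/-- vertex characterization via an arbitrary point of the cone -/
lemma vert_iff_pt (F : Face 𝒜) {z : A} (hz : z ∈ F.c) (v : Chamber 𝒜) :
    F.vert v ↔ ∀ H ∈ 𝒜.hyps, ¬ F.B ≤ H → ss (fH H z) (fH H (cpt v)) := by
  rw [vert_iff]
  obtain ⟨-, hzsgn⟩ := (face_mem_iff F z).mp hz
  constructor
  · intro h H hH hBH
    exact ss_trans (hzsgn H hH hBH) (h H hH hBH)
  · intro h H hH hBH
    exact ss_trans (ss_symm (hzsgn H hH hBH)) (h H hH hBH)

end Aux15f

section Aux15g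

variable {𝒜 : RealArr A}

lemma ss_neg_smul {e c : ℝ} (he : 0 < e) (hc : c ≠ 0) : ¬ ss (-(e * c)) c := by
  unfold ss
  intro h
  nlinarith [mul_self_pos.mpr hc]

lemma ss_iff_of {a a' b b' : ℝ} (h1 : ss a a') (h2 : ss b b') : ss a b ↔ ss a' b' :=
  ⟨fun h => ss_trans (ss_symm h1) (ss_trans h h2),
   fun h => ss_trans h1 (ss_trans h (ss_symm h2))⟩

lemma core (F : Face 𝒜) (a : Chamber 𝒜) (hva : F.vert a) :
    ∀ (n : ℕ) (zB : ↥F.B),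
      (∀ H ∈ 𝒜.hyps, ¬ F.B ≤ H → fH H (zB : A) ≠ 0) →
      (((𝒜.hyps.filter fun H => ¬ F.B ≤ H).filter
          (fun H => ¬ ss (fH H (zB : A)) (fH H (fpt F)))).card = n) →
      ∀ (v : Chamber 𝒜),
        (∀ H ∈ 𝒜.hyps, ¬ F.B ≤ H → ss (fH H (cpt v)) (fH H (zB : A))) →
        (∀ H ∈ 𝒜.hyps, F.B ≤ H → ss (fH H (cpt v)) (fH H (cpt a))) →
        ∀ (q : Path 𝒜 v a), q.Positive → q.Minimal →
          IsElemComp 𝒜 F.B (⟦q⟧ : Mor 𝒜 v a) := by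
  intro n
  induction n using Nat.strong_induction_on with
  | _ n IH =>
    intro zB hnz hn v hvoff hvon q hqpos hqmin
    classical
    set Sfin := 𝒜.hyps.filter (fun H => ¬ F.B ≤ H) with hSfin
    have hSmem : ∀ H ∈ Sfin, H ∈ 𝒜.hyps ∧ ¬ F.B ≤ H := fun H hH => Finset.mem_filter.mp hH
    set g : Submodule ℝ A → (↥F.B →ₗ[ℝ] ℝ) := fun H => (fH H).comp F.B.subtype with hgdef
    have hgval : ∀ (H : Submodule ℝ A) (w : ↥F.B), g H w = fH H (w : A) := fun H w => rfl
    set xpt : ↥F.B := ⟨fpt F, fpt_memB F⟩ with hxptdef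
    set Dv := Sfin.filter (fun H => ¬ ss (fH H (zB : A)) (fH H (fpt F))) with hDvdef
    -- vertex signs of a
    have hax : ∀ H ∈ 𝒜.hyps, ¬ F.B ≤ H → ss (fH H (fpt F)) (fH H (cpt a)) :=
      (vert_iff F a).mp hva
    rcases Finset.eq_empty_or_nonempty Dv with hemp | hne
    · -- base case: v = a, q = nil
      have hsep : SepF v a = ∅ := by
        unfold SepF
        rw [Finset.filter_eq_empty_iff]
        intro H hH hns
        by_cases hBH : F.B ≤ H
        · exact hns (hvon H hH hBH)
        · have hzx : ss (fH H (zB : A)) (fH H (fpt F)) := by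
            by_contra hc
            have : H ∈ Dv := Finset.mem_filter.mpr ⟨Finset.mem_filter.mpr ⟨hH, hBH⟩, hc⟩
            rw [hemp] at this
            exact absurd this (Finset.notMem_empty H)
          exact hns (ss_trans (hvoff H hH hBH) (ss_trans hzx (hax H hH hBH)))
      have hveq : v = a := eq_of_sepF_empty hsep
      subst hveq
      have hq0 : q.length = 0 := Nat.le_zero.mp (hqmin (Path.nil v))
      cases q with
      | nil => exact IsElemComp.nil v
      | cons s p => simp [Path.length] at hq0
    · -- inductive step
      -- openness of the preimage of the cone
      have hUeq : (Subtype.val ⁻¹' F.c : Set ↥F.B)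
          = ⋂ H ∈ Sfin, {w : ↥F.B | ss (fH H (w : A)) (fH H (fpt F))} := by
        ext w
        simp only [Set.mem_preimage, Set.mem_iInter, Set.mem_setOf_eq]
        rw [face_mem_iff]
        constructor
        · rintro ⟨-, h⟩ H hHm
          obtain ⟨hH, hBH⟩ := hSmem H hHm
          exact h H hH hBH
        · intro h
          exact ⟨w.2, fun H hH hBH => h H (Finset.mem_filter.mpr ⟨hH, hBH⟩)⟩
      have hUo : IsOpen (Subtype.val ⁻¹' F.c : Set ↥F.B) := by
        rw [hUeq]
        apply isOpen_biInter_finset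
        intro H hHm
        have hcont : Continuous (fun w : ↥F.B => fH H (w : A) * fH H (fpt F)) :=
          (LinearMap.continuous_of_finiteDimensional (g H)).mul continuous_const
        exact isOpen_Ioi.preimage hcont
      have hw₀U : xpt ∈ (Subtype.val ⁻¹' F.c : Set ↥F.B) := by
        simp only [Set.mem_preimage]
        exact fpt_mem_c F
      obtain ⟨z₁, z₂, W, hWD, hWne, hWzero, hz₁, hz₂, hz₂W, hz₂w₀, hpairs⟩ :=
        absStep Sfin g zB xpt (Subtype.val ⁻¹' F.c) hUo hw₀U
          (fun H hHm => hnz H (hSmem H hHm).1 (hSmem H hHm).2)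
          (fun H hHm => fpt_ne F (hSmem H hHm).1 (hSmem H hHm).2)
          (fun w hw H hHm => ((face_mem_iff F (w : A)).mp hw).2 H
            (hSmem H hHm).1 (hSmem H hHm).2)
          hne
      have hWDv : W ⊆ Dv := hWD
      have hWS : ∀ H ∈ W, H ∈ Sfin := fun H hH => Finset.filter_subset _ _ (hWDv hH)
      have hWhyps : ∀ H ∈ W, H ∈ 𝒜.hyps := fun H hH => (hSmem H (hWS H hH)).1
      have hWnB : ∀ H ∈ W, ¬ F.B ≤ H := fun H hH => (hSmem H (hWS H hH)).2
      obtain ⟨H₁, hH₁W⟩ := hWne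
      -- nonzero of z₂ on Sfin
      have hz₂nz : ∀ H ∈ Sfin, fH H ((z₂ : ↥F.B) : A) ≠ 0 := by
        intro H hHm
        by_cases hHW : H ∈ W
        · exact ss_ne_left (hz₂w₀ H hHW)
        · exact ss_ne_left (hz₂ H hHm hHW)
      -- rank of kernels
      have hgrank : ∀ H ∈ Sfin, Module.finrank ℝ (LinearMap.ker (g H)) + 1
          = Module.finrank ℝ ↥F.B := by
        intro H hHm
        have hval : g H zB ≠ 0 := hnz H (hSmem H hHm).1 (hSmem H hHm).2
        have hrange : LinearMap.range (g H) = ⊤ := by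
          rw [LinearMap.range_eq_top]
          intro r
          refine ⟨(r / g H zB) • zB, ?_⟩
          rw [map_smul, smul_eq_mul]
          field_simp
        have hrn := LinearMap.finrank_range_add_finrank_ker (g H)
        rw [hrange, finrank_top, Module.finrank_self] at hrn
        omega
      -- all kernels in W agree
      have hkerW : ∀ H ∈ W, LinearMap.ker (g H) = LinearMap.ker (g H₁) := by
        intro H hHW
        have hsup := hpairs H hHW H₁ hH₁W
        have h3 := Submodule.finrank_sup_add_finrank_inf_eq
          (LinearMap.ker (g H) ⊓ LinearMap.ker (g H₁)) (Submodule.span ℝ {zB})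
        rw [hsup, finrank_top] at h3
        have hspan := finrank_span_le (V := ↥F.B) zB
        have h5 : Module.finrank ℝ
            ↥((LinearMap.ker (g H) ⊓ LinearMap.ker (g H₁)) ⊓ Submodule.span ℝ {zB}) ≤
            Module.finrank ℝ (Submodule.span ℝ {zB}) :=
          Submodule.finrank_mono inf_le_right
        have hrH := hgrank H (hWS H hHW)
        have hrH₁ := hgrank H₁ (hWS H₁ hH₁W)
        have hinfH : Module.finrank ℝ (LinearMap.ker (g H)) ≤
            Module.finrank ℝ ↥(LinearMap.ker (g H) ⊓ LinearMap.ker (g H₁)) := by omega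
        have h6 : LinearMap.ker (g H) ⊓ LinearMap.ker (g H₁) = LinearMap.ker (g H) :=
          Submodule.eq_of_le_of_finrank_le inf_le_left hinfH
        have hinfH₁ : Module.finrank ℝ (LinearMap.ker (g H₁)) ≤
            Module.finrank ℝ ↥(LinearMap.ker (g H) ⊓ LinearMap.ker (g H₁)) := by omega
        have h7 : LinearMap.ker (g H) ⊓ LinearMap.ker (g H₁) = LinearMap.ker (g H₁) :=
          Submodule.eq_of_le_of_finrank_le inf_le_right hinfH₁
        rw [← h6, h7]
      -- the subspace B₀
      obtain ⟨S_F, hS_Fsub, hS_FB⟩ := F.hB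
      set B₀ := (S_F ∪ W).inf id with hB₀def
      have hB₀le : B₀ ≤ F.B := by
        rw [hS_FB]
        exact Finset.inf_mono Finset.subset_union_left
      have hB₀leW : ∀ H ∈ W, B₀ ≤ H :=
        fun H hH => Finset.inf_le (Finset.mem_union_right _ hH)
      have hFBle : ∀ H ∈ S_F, F.B ≤ H := by
        intro H hH
        rw [hS_FB]
        exact Finset.inf_le hH
      have hz₁B₀ : ((z₁ : ↥F.B) : A) ∈ B₀ := by
        rw [hB₀def]
        rw [Submodule.mem_finsetInf]
        intro J hJ
        rcases Finset.mem_union.mp hJ with hJ | hJ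
        · exact hFBle J hJ z₁.2
        · exact (fH_zero_iff (coatom_of_mem (hWhyps J hJ)) _).mp (hWzero J hJ)
      have hz₁avoid : ∀ H ∈ 𝒜.hyps, ¬ B₀ ≤ H → ((z₁ : ↥F.B) : A) ∉ H := by
        intro H hH hBH hmem
        by_cases hFB : F.B ≤ H
        · exact hBH (le_trans hB₀le hFB)
        · have hHS : H ∈ Sfin := Finset.mem_filter.mpr ⟨hH, hFB⟩
          by_cases hHW : H ∈ W
          · exact hBH (hB₀leW H hHW)
          · exact ss_ne_left (hz₁ H hHS hHW)
              ((fH_zero_iff (coatom_of_mem hH) _).mpr hmem)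
      -- rank of B₀
      have hB₀eq : B₀ = (LinearMap.ker (g H₁)).map F.B.subtype := by
        ext x
        constructor
        · intro hx
          have hxB : x ∈ F.B := hB₀le hx
          refine ⟨⟨x, hxB⟩, ?_, rfl⟩
          show fH H₁ x = 0
          exact (fH_zero_iff (coatom_of_mem (hWhyps H₁ hH₁W)) _).mpr (hB₀leW H₁ hH₁W hx)
        · rintro ⟨w, hw, rfl⟩
          rw [Submodule.mem_finsetInf]
          intro J hJ
          rcases Finset.mem_union.mp hJ with hJ | hJ
          · exact hFBle J hJ w.2
          · have hwJ : w ∈ LinearMap.ker (g J) := by rw [hkerW J hJ]; exact hw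
            have hwJ0 : fH J ((w : ↥F.B) : A) = 0 := hwJ
            exact (fH_zero_iff (coatom_of_mem (hWhyps J hJ)) _).mp hwJ0
      have hB₀rank : Module.finrank ℝ B₀ + 1 = Module.finrank ℝ F.B := by
        have he : Module.finrank ℝ (LinearMap.ker (g H₁)) = Module.finrank ℝ B₀ := by
          rw [hB₀eq]
          exact LinearEquiv.finrank_eq
            (Submodule.equivMapOfInjective F.B.subtype
              (Submodule.injective_subtype F.B) (LinearMap.ker (g H₁)))
        rw [← he]
        exact hgrank H₁ (hWS H₁ hH₁W)
      -- the three faces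
      set F₀ : Face 𝒜 :=
        ⟨B₀, connectedComponentIn (strat 𝒜 B₀) ((z₁ : ↥F.B) : A),
          ⟨S_F ∪ W, Finset.union_subset hS_Fsub (fun H hH => hWhyps H hH), rfl⟩,
          ⟨((z₁ : ↥F.B) : A), hz₁B₀, hz₁avoid, rfl⟩⟩ with hF₀def
      have hzBavoid : ∀ H ∈ 𝒜.hyps, ¬ F.B ≤ H → ((zB : ↥F.B) : A) ∉ H :=
        fun H hH hBH hmem => hnz H hH hBH ((fH_zero_iff (coatom_of_mem hH) _).mpr hmem)
      have hz₂avoid : ∀ H ∈ 𝒜.hyps, ¬ F.B ≤ H → ((z₂ : ↥F.B) : A) ∉ H :=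
        fun H hH hBH hmem => hz₂nz H (Finset.mem_filter.mpr ⟨hH, hBH⟩)
          ((fH_zero_iff (coatom_of_mem hH) _).mpr hmem)
      set G₁ : Face 𝒜 :=
        ⟨F.B, connectedComponentIn (strat 𝒜 F.B) ((zB : ↥F.B) : A), F.hB,
          ⟨((zB : ↥F.B) : A), zB.2, hzBavoid, rfl⟩⟩ with hG₁def
      set G₂ : Face 𝒜 :=
        ⟨F.B, connectedComponentIn (strat 𝒜 F.B) ((z₂ : ↥F.B) : A), F.hB,
          ⟨((z₂ : ↥F.B) : A), z₂.2, hz₂avoid, rfl⟩⟩ with hG₂def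
      have hzBmemG₁ : ((zB : ↥F.B) : A) ∈ G₁.c :=
        mem_connectedComponentIn ⟨zB.2, hzBavoid⟩
      have hz₂memG₂ : ((z₂ : ↥F.B) : A) ∈ G₂.c :=
        mem_connectedComponentIn ⟨z₂.2, hz₂avoid⟩
      have hz₁memF₀ : ((z₁ : ↥F.B) : A) ∈ F₀.c :=
        mem_connectedComponentIn ⟨hz₁B₀, hz₁avoid⟩
      have hG₁B : G₁.B = F.B := rfl
      have hG₂B : G₂.B = F.B := rfl
      have hF₀B : F₀.B = B₀ := rfl
      -- G₁ ≠ G₂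
      have hG₁G₂ : G₁ ≠ G₂ := by
        intro he
        have hc : G₁.c = G₂.c := congrArg Face.c he
        have hmem : ((zB : ↥F.B) : A) ∈ G₂.c := hc ▸ hzBmemG₁
        have h1 := ((face_mem_iff G₂ _).mp hmem).2 H₁ (hWhyps H₁ hH₁W) (hWnB H₁ hH₁W)
        have h2 := ((face_mem_iff G₂ _).mp hz₂memG₂).2 H₁ (hWhyps H₁ hH₁W) (hWnB H₁ hH₁W)
        exact hz₂W H₁ hH₁W (ss_trans h2 (ss_symm h1))
      -- vert characterizations
      have hvertG₁ : ∀ v' : Chamber 𝒜, G₁.vert v' ↔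
          ∀ H ∈ 𝒜.hyps, ¬ F.B ≤ H → ss (fH H ((zB : ↥F.B) : A)) (fH H (cpt v')) :=
        fun v' => vert_iff_pt G₁ hzBmemG₁ v'
      have hvertG₂ : ∀ v' : Chamber 𝒜, G₂.vert v' ↔
          ∀ H ∈ 𝒜.hyps, ¬ F.B ≤ H → ss (fH H ((z₂ : ↥F.B) : A)) (fH H (cpt v')) :=
        fun v' => vert_iff_pt G₂ hz₂memG₂ v'
      have hvertF₀ : ∀ v' : Chamber 𝒜, F₀.vert v' ↔
          ∀ H ∈ 𝒜.hyps, ¬ B₀ ≤ H → ss (fH H ((z₁ : ↥F.B) : A)) (fH H (cpt v')) :=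
        fun v' => vert_iff_pt F₀ hz₁memF₀ v'
      -- classification of H ∉ B₀
      have hnotB₀ : ∀ H ∈ 𝒜.hyps, ¬ B₀ ≤ H → ¬ F.B ≤ H ∧ H ∉ W := by
        intro H hH hBH
        constructor
        · exact fun hFB => hBH (le_trans hB₀le hFB)
        · exact fun hHW => hBH (hB₀leW H hHW)
      have hle₁ : G₁.le F₀ := by
        intro v' hv'
        rw [hvertG₁] at hv'
        rw [hvertF₀]
        intro H hH hBH
        obtain ⟨hFB, hHW⟩ := hnotB₀ H hH hBH
        have hHS : H ∈ Sfin := Finset.mem_filter.mpr ⟨hH, hFB⟩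
        exact ss_trans (hz₁ H hHS hHW) (hv' H hH hFB)
      have hle₂ : G₂.le F₀ := by
        intro v' hv'
        rw [hvertG₂] at hv'
        rw [hvertF₀]
        intro H hH hBH
        obtain ⟨hFB, hHW⟩ := hnotB₀ H hH hBH
        have hHS : H ∈ Sfin := Finset.mem_filter.mpr ⟨hH, hFB⟩
        exact ss_trans (ss_trans (hz₁ H hHS hHW) (ss_symm (hz₂ H hHS hHW)))
          (hv' H hH hFB)
      have hadjF : AdjFaces G₁ G₂ := by
        refine ⟨hG₁G₂, rfl, F₀, hle₁, hle₂, ?_⟩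
        show Module.finrank ℝ F.B = Module.finrank ℝ B₀ + 1
        omega
      -- the chamber v₁
      obtain ⟨ε₂, hε₂, heps₂⟩ := exists_eps Sfin
        (fun H => fH H ((z₂ : ↥F.B) : A)) (fun H => fH H (cpt a)) hz₂nz
      set ξ := ((z₂ : ↥F.B) : A) + ε₂ • (cpt a) with hξdef
      have hξval : ∀ H : Submodule ℝ A, fH H ξ = fH H ((z₂ : ↥F.B) : A) + ε₂ * fH H (cpt a) := by
        intro H
        rw [hξdef, map_add, map_smul, smul_eq_mul]
      have hξB : ∀ H ∈ 𝒜.hyps, F.B ≤ H → fH H ξ = ε₂ * fH H (cpt a) := by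
        intro H hH hBH
        rw [hξval]
        have : fH H ((z₂ : ↥F.B) : A) = 0 :=
          (fH_zero_iff (coatom_of_mem hH) _).mpr (hBH z₂.2)
        rw [this, zero_add]
      have hξcmpl : ξ ∈ cmpl 𝒜 := by
        apply mem_cmpl_of_ne
        intro H hH
        by_cases hBH : F.B ≤ H
        · rw [hξB H hH hBH]
          exact mul_ne_zero (ne_of_gt hε₂) (cpt_ne hH)
        · have hHS : H ∈ Sfin := Finset.mem_filter.mpr ⟨hH, hBH⟩
          have h1 := heps₂ ε₂ hε₂ le_rfl H hHS
          rw [← hξval H] at h1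
          exact ss_ne_left h1
      set v₁ := chamberOf ξ hξcmpl with hv₁def
      have hξsign : ∀ H ∈ 𝒜.hyps, ss (fH H ξ) (fH H (cpt v₁)) :=
        fun H hH => mem_sign (mem_chamberOf hξcmpl) hH
      have hv₁off : ∀ H ∈ 𝒜.hyps, ¬ F.B ≤ H →
          ss (fH H (cpt v₁)) (fH H ((z₂ : ↥F.B) : A)) := by
        intro H hH hBH
        have hHS : H ∈ Sfin := Finset.mem_filter.mpr ⟨hH, hBH⟩
        have h1 : ss (fH H ξ) (fH H ((z₂ : ↥F.B) : A)) := by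
          rw [hξval H]
          exact heps₂ ε₂ hε₂ le_rfl H hHS
        exact ss_trans (ss_symm (hξsign H hH)) h1
      have hv₁on : ∀ H ∈ 𝒜.hyps, F.B ≤ H → ss (fH H (cpt v₁)) (fH H (cpt a)) := by
        intro H hH hBH
        have h1 : ss (fH H ξ) (fH H (cpt a)) := by
          rw [hξB H hH hBH]
          unfold ss
          nlinarith [mul_self_pos.mpr (cpt_ne (C := a) hH), hε₂]
        exact ss_trans (ss_symm (hξsign H hH)) h1
      -- ParTrans
      have hpar : ParTrans G₁ G₂ v v₁ := by
        refine ⟨rfl, ?_, ?_, ?_⟩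
        · rw [hvertG₁]
          intro H hH hBH
          exact ss_symm (hvoff H hH hBH)
        · rw [hvertG₂]
          intro H hH hBH
          exact ss_symm (hv₁off H hH hBH)
        · intro H hH hBH
          rw [separates_iff hH]
          intro hns
          exact hns (ss_trans (hvon H hH hBH) (ss_symm (hv₁on H hH hBH)))
      -- SepF v v₁ = W
      have hSvv₁ : SepF v v₁ = W := by
        ext H
        constructor
        · intro hmem
          have hH : H ∈ 𝒜.hyps := (Finset.mem_filter.mp hmem).1
          have hns : ¬ ss (fH H (cpt v)) (fH H (cpt v₁)) := (Finset.mem_filter.mp hmem).2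
          by_cases hBH : F.B ≤ H
          · exact absurd (ss_trans (hvon H hH hBH) (ss_symm (hv₁on H hH hBH))) hns
          · have hHS : H ∈ Sfin := Finset.mem_filter.mpr ⟨hH, hBH⟩
            by_contra hHW
            exact hns (ss_trans (hvoff H hH hBH)
              (ss_trans (ss_symm (hz₂ H hHS hHW)) (ss_symm (hv₁off H hH hBH))))
        · intro hHW
          have hH := hWhyps H hHW
          have hBH := hWnB H hHW
          refine Finset.mem_filter.mpr ⟨hH, fun hss => ?_⟩
          apply hz₂W H hHW
          exact ss_trans (ss_symm (hv₁off H hH hBH))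
            (ss_trans (ss_symm hss) (hvoff H hH hBH))
      -- SepF v a = Dv
      have hSva : SepF v a = Dv := by
        ext H
        constructor
        · intro hmem
          have hH : H ∈ 𝒜.hyps := (Finset.mem_filter.mp hmem).1
          have hns : ¬ ss (fH H (cpt v)) (fH H (cpt a)) := (Finset.mem_filter.mp hmem).2
          by_cases hBH : F.B ≤ H
          · exact absurd (hvon H hH hBH) hns
          · refine Finset.mem_filter.mpr ⟨Finset.mem_filter.mpr ⟨hH, hBH⟩, fun hss => ?_⟩
            exact hns (ss_trans (hvoff H hH hBH) (ss_trans hss (hax H hH hBH)))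
        · intro hmem
          have hHS : H ∈ Sfin := (Finset.mem_filter.mp hmem).1
          have hns : ¬ ss (fH H ((zB : ↥F.B) : A)) (fH H (fpt F)) :=
            (Finset.mem_filter.mp hmem).2
          obtain ⟨hH, hBH⟩ := hSmem H hHS
          refine Finset.mem_filter.mpr ⟨hH, fun hss => ?_⟩
          exact hns (ss_trans (ss_symm (hvoff H hH hBH))
            (ss_trans hss (ss_symm (hax H hH hBH))))
      -- SepF v₁ a = Dv'
      set Dv' := Sfin.filter (fun H => ¬ ss (fH H ((z₂ : ↥F.B) : A)) (fH H (fpt F)))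
        with hDv'def
      have hSv₁a : SepF v₁ a = Dv' := by
        ext H
        constructor
        · intro hmem
          have hH : H ∈ 𝒜.hyps := (Finset.mem_filter.mp hmem).1
          have hns : ¬ ss (fH H (cpt v₁)) (fH H (cpt a)) := (Finset.mem_filter.mp hmem).2
          by_cases hBH : F.B ≤ H
          · exact absurd (hv₁on H hH hBH) hns
          · refine Finset.mem_filter.mpr ⟨Finset.mem_filter.mpr ⟨hH, hBH⟩, fun hss => ?_⟩
            exact hns (ss_trans (hv₁off H hH hBH) (ss_trans hss (hax H hH hBH)))
        · intro hmem
          have hHS : H ∈ Sfin := (Finset.mem_filter.mp hmem).1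
          have hns : ¬ ss (fH H ((z₂ : ↥F.B) : A)) (fH H (fpt F)) :=
            (Finset.mem_filter.mp hmem).2
          obtain ⟨hH, hBH⟩ := hSmem H hHS
          refine Finset.mem_filter.mpr ⟨hH, fun hss => ?_⟩
          exact hns (ss_trans (ss_symm (hv₁off H hH hBH))
            (ss_trans hss (ss_symm (hax H hH hBH))))
      have hDv'eq : Dv' = Dv \ W := by
        ext H
        constructor
        · intro hmem
          have hHS : H ∈ Sfin := (Finset.mem_filter.mp hmem).1
          have hns : ¬ ss (fH H ((z₂ : ↥F.B) : A)) (fH H (fpt F)) :=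
            (Finset.mem_filter.mp hmem).2
          have hHW : H ∉ W := fun hHW => hns (hz₂w₀ H hHW)
          refine Finset.mem_sdiff.mpr ⟨Finset.mem_filter.mpr ⟨hHS, fun hss => ?_⟩, hHW⟩
          exact hns (ss_trans (hz₂ H hHS hHW) hss)
        · intro hmem
          obtain ⟨hmemDv, hHW⟩ := Finset.mem_sdiff.mp hmem
          have hHS : H ∈ Sfin := (Finset.mem_filter.mp hmemDv).1
          have hns : ¬ ss (fH H ((zB : ↥F.B) : A)) (fH H (fpt F)) :=
            (Finset.mem_filter.mp hmemDv).2
          refine Finset.mem_filter.mpr ⟨hHS, fun hss => ?_⟩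
          exact hns (ss_trans (ss_symm (hz₂ H hHS hHW)) hss)
      -- cardinalities
      have hWDvsub : W ⊆ Dv := hWD
      have hcardW : 0 < W.card := Finset.card_pos.mpr ⟨H₁, hH₁W⟩
      have hcardle : W.card ≤ Dv.card := Finset.card_le_card hWDvsub
      have hcardDv' : Dv'.card = Dv.card - W.card := by
        rw [hDv'eq, Finset.card_sdiff_of_subset hWDvsub]
      have hlt : Dv'.card < n := by omega
      -- the elementary segment r and the tail q₁
      obtain ⟨r, hrpos, hrlen⟩ := exists_minpos_path v v₁
      have hrmin : r.Minimal := minimal_of_length_eq hrlen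
      obtain ⟨q₁, hq₁pos, hq₁len⟩ := exists_minpos_path v₁ a
      have hq₁min : q₁.Minimal := minimal_of_length_eq hq₁len
      have hz₂nz' : ∀ H ∈ 𝒜.hyps, ¬ F.B ≤ H → fH H ((z₂ : ↥F.B) : A) ≠ 0 :=
        fun H hH hBH => hz₂nz H (Finset.mem_filter.mpr ⟨hH, hBH⟩)
      have hIH := IH Dv'.card hlt z₂ hz₂nz' rfl v₁ hv₁off hv₁on q₁ hq₁pos hq₁min
      -- the composite is minimal positive
      have hcomppos : (r.comp q₁).Positive := positive_comp hrpos hq₁pos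
      have hcomplen : (r.comp q₁).length = (SepF v a).card := by
        rw [length_comp, hrlen, hq₁len, hSvv₁, hSva, hSv₁a, hcardDv']
        omega
      have hcompmin : (r.comp q₁).Minimal := minimal_of_length_eq hcomplen
      have hqeq : (⟦q⟧ : Mor 𝒜 v a) = Mor.comp (⟦r⟧ : Mor 𝒜 v v₁) ⟦q₁⟧ := by
        rw [Mor.comp_mk]
        exact Quotient.sound (Rel.minpos q (r.comp q₁) hqpos hcomppos hqmin hcompmin)
      rw [hqeq]
      refine IsElemComp.comp _ _ (IsElemComp.single _ ?_) hIH
      exact ⟨G₁, G₂, rfl, hadjF, hpar, r, hrpos, hrmin, rfl⟩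

end Aux15g


end DelGrpd

open DelGrpd in
/-- Let `F ⊆ F'` be two faces of `Z(𝒜)`, let `B` be the subspace dual to
`F`, and let `y` be a vertex of `F`.  Then `Δ^y(F') (Δ^y(F))⁻¹` is equivalent to a
concatenation of elementary `B`-segments. -/
theorem statement_15 {A : Type} [NormedAddCommGroup A] [InnerProductSpace ℝ A]
    [FiniteDimensional ℝ A] (𝒜 : RealArr A) (hsimp : Simplicial 𝒜)
    (F F' : Face 𝒜) (hle : F.le F') (y : Chamber 𝒜) (hyF : F.vert y)
    {a a' : Chamber 𝒜} (δ : Mor 𝒜 a y) (δ' : Mor 𝒜 a' y)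
    (hδ : IsGarside F δ) (hδ' : IsGarside F' δ') :
    IsElemComp 𝒜 F.B (δ'.comp δ.symm) := by
  classical
  obtain ⟨hantF, p, hppos, hpmin, hpinface, hδeq⟩ := hδ
  obtain ⟨hantF', p', hp'pos, hp'min, hp'inface, hδ'eq⟩ := hδ'
  obtain ⟨hFa, hFy, hsepF⟩ := hantF
  obtain ⟨hF'a', hF'y, hsepF'⟩ := hantF'
  -- hyperplanes above F.B are above F'.B
  have hiii : ∀ H ∈ 𝒜.hyps, F.B ≤ H → F'.B ≤ H := by
    intro H hH hBH
    by_contra hB'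
    have hva : F'.vert a := hle a hFa
    have hvy : F'.vert y := hle y hFy
    have h1 := (vert_iff F' a).mp hva H hH hB'
    have h2 := (vert_iff F' y).mp hvy H hH hB'
    have hss : ss (fH H (cpt a)) (fH H (cpt y)) := ss_trans (ss_symm h1) h2
    exact ((separates_iff hH).mp ((hsepF H hH).mp hBH)) hss
  obtain ⟨S_F, hS_Fsub, hS_FB⟩ := F.hB
  have hB'B : F'.B ≤ F.B := by
    rw [hS_FB]
    apply Finset.le_inf
    intro H hH
    have hFBH : F.B ≤ H := by rw [hS_FB]; exact Finset.inf_le hH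
    exact hiii H (hS_Fsub hH) hFBH
  -- the starting point z₀ of the B-walk (reflection of F through F')
  obtain ⟨ε₀, hε₀, heps₀⟩ := exists_eps (𝒜.hyps.filter fun H => ¬ F'.B ≤ H)
    (fun H => fH H (fpt F')) (fun H => fH H (fpt F') - fH H (fpt F))
    (fun H hHm => fpt_ne F' (Finset.mem_filter.mp hHm).1 (Finset.mem_filter.mp hHm).2)
  set z₀ : A := fpt F' + ε₀ • (fpt F' - fpt F) with hz₀def
  have hz₀B : z₀ ∈ F.B :=
    F.B.add_mem (hB'B (fpt_memB F'))
      (F.B.smul_mem _ (F.B.sub_mem (hB'B (fpt_memB F')) (fpt_memB F)))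
  have hz₀val : ∀ H : Submodule ℝ A,
      fH H z₀ = fH H (fpt F') + ε₀ * (fH H (fpt F') - fH H (fpt F)) := by
    intro H
    rw [hz₀def, map_add, map_smul, map_sub, smul_eq_mul]
  have hcase1 : ∀ H ∈ 𝒜.hyps, ¬ F'.B ≤ H → ss (fH H z₀) (fH H (fpt F')) := by
    intro H hH hB'
    have h1 := heps₀ ε₀ hε₀ le_rfl H (Finset.mem_filter.mpr ⟨hH, hB'⟩)
    rw [← hz₀val H] at h1
    exact h1
  have hcase2 : ∀ H ∈ 𝒜.hyps, F'.B ≤ H → fH H z₀ = -(ε₀ * fH H (fpt F)) := by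
    intro H hH hB'
    have hx'0 : fH H (fpt F') = 0 :=
      (fH_zero_iff (coatom_of_mem hH) _).mpr (hB' (fpt_memB F'))
    rw [hz₀val H, hx'0]; ring
  have hz₀nz : ∀ H ∈ 𝒜.hyps, ¬ F.B ≤ H → fH H z₀ ≠ 0 := by
    intro H hH hBH
    by_cases hB' : F'.B ≤ H
    · rw [hcase2 H hH hB']
      exact neg_ne_zero.mpr (mul_ne_zero (ne_of_gt hε₀) (fpt_ne F hH hBH))
    · exact ss_ne_left (hcase1 H hH hB')
  -- sign conditions at a'
  have hvoff : ∀ H ∈ 𝒜.hyps, ¬ F.B ≤ H → ss (fH H (cpt a')) (fH H z₀) := by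
    intro H hH hBH
    by_cases hB' : F'.B ≤ H
    · have hsep' : Separates H a'.1 y.1 := (hsepF' H hH).mp hB'
      have hns1 : ¬ ss (fH H (cpt a')) (fH H (cpt y)) := (separates_iff hH).mp hsep'
      have hss_x0y : ss (fH H (fpt F)) (fH H (cpt y)) := (vert_iff F y).mp hFy H hH hBH
      have hz₀x₀ : ¬ ss (fH H z₀) (fH H (fpt F)) := by
        rw [hcase2 H hH hB']
        exact ss_neg_smul hε₀ (fpt_ne F hH hBH)
      have hns2 : ¬ ss (fH H (cpt a')) (fH H (fpt F)) :=
        fun hss => hns1 (ss_trans hss hss_x0y)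
      exact ns_ns hns2 hz₀x₀ (cpt_ne hH) (hz₀nz H hH hBH) (fpt_ne F hH hBH)
    · have hss1 : ss (fH H (cpt a')) (fH H (cpt y)) := by
        by_contra hn
        exact hB' ((hsepF' H hH).mpr ((separates_iff hH).mpr hn))
      have hss2 : ss (fH H (cpt y)) (fH H (fpt F')) :=
        ss_symm ((vert_iff F' y).mp hF'y H hH hB')
      have hss3 : ss (fH H (fpt F')) (fH H z₀) := ss_symm (hcase1 H hH hB')
      exact ss_trans hss1 (ss_trans hss2 hss3)
  have hvon : ∀ H ∈ 𝒜.hyps, F.B ≤ H → ss (fH H (cpt a')) (fH H (cpt a)) := by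
    intro H hH hBH
    have hB' : F'.B ≤ H := hiii H hH hBH
    have hns1 : ¬ ss (fH H (cpt a')) (fH H (cpt y)) :=
      (separates_iff hH).mp ((hsepF' H hH).mp hB')
    have hns2 : ¬ ss (fH H (cpt a)) (fH H (cpt y)) :=
      (separates_iff hH).mp ((hsepF H hH).mp hBH)
    exact ns_ns hns1 hns2 (cpt_ne hH) (cpt_ne hH) (cpt_ne hH)
  -- the minimal positive gallery from a' to a
  obtain ⟨q₀, hq₀pos, hq₀len⟩ := exists_minpos_path a' a
  have hq₀min : q₀.Minimal := minimal_of_length_eq hq₀len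
  have hcore := core F a hFa _ (⟨z₀, hz₀B⟩ : ↥F.B) hz₀nz rfl a' hvoff hvon q₀ hq₀pos hq₀min
  -- separation set computations
  have hSay : SepF a y = 𝒜.hyps.filter (fun H => F.B ≤ H) := by
    unfold SepF
    apply Finset.filter_congr
    intro H hH
    exact ((hsepF H hH).trans (separates_iff hH)).symm
  have hSa'y : SepF a' y = 𝒜.hyps.filter (fun H => F'.B ≤ H) := by
    unfold SepF
    apply Finset.filter_congr
    intro H hH
    exact ((hsepF' H hH).trans (separates_iff hH)).symm
  have hSa'a : SepF a' a = 𝒜.hyps.filter (fun H => F'.B ≤ H ∧ ¬ F.B ≤ H) := by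
    ext H
    constructor
    · intro hmem
      have hH : H ∈ 𝒜.hyps := (Finset.mem_filter.mp hmem).1
      have hns : ¬ ss (fH H (cpt a')) (fH H (cpt a)) := (Finset.mem_filter.mp hmem).2
      by_cases hBH : F.B ≤ H
      · exact absurd (hvon H hH hBH) hns
      · by_cases hB' : F'.B ≤ H
        · exact Finset.mem_filter.mpr ⟨hH, hB', hBH⟩
        · exfalso
          apply hns
          have hss1 : ss (fH H (cpt a')) (fH H (cpt y)) := by
            by_contra hn
            exact hB' ((hsepF' H hH).mpr ((separates_iff hH).mpr hn))
          have hss2 : ss (fH H (cpt a)) (fH H (cpt y)) := by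
            by_contra hn
            exact hBH ((hsepF H hH).mpr ((separates_iff hH).mpr hn))
          exact ss_trans hss1 (ss_symm hss2)
    · intro hmem
      obtain ⟨hH, hB', hBH⟩ := Finset.mem_filter.mp hmem
      refine Finset.mem_filter.mpr ⟨hH, fun hss => ?_⟩
      have hss_az : ss (fH H (cpt a')) (fH H z₀) := hvoff H hH hBH
      have hss_x0a : ss (fH H (fpt F)) (fH H (cpt a)) := (vert_iff F a).mp hFa H hH hBH
      have hz₀x₀ : ¬ ss (fH H z₀) (fH H (fpt F)) := by
        rw [hcase2 H hH hB']
        exact ss_neg_smul hε₀ (fpt_ne F hH hBH)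
      apply hz₀x₀
      exact ss_trans (ss_symm hss_az) (ss_trans hss (ss_symm hss_x0a))
  have hunion : 𝒜.hyps.filter (fun H => F'.B ≤ H)
      = 𝒜.hyps.filter (fun H => F'.B ≤ H ∧ ¬ F.B ≤ H)
        ∪ 𝒜.hyps.filter (fun H => F.B ≤ H) := by
    ext H
    simp only [Finset.mem_filter, Finset.mem_union]
    constructor
    · rintro ⟨hH, hB'⟩
      by_cases hBH : F.B ≤ H
      · exact Or.inr ⟨hH, hBH⟩
      · exact Or.inl ⟨hH, hB', hBH⟩
    · rintro (⟨hH, hB', -⟩ | ⟨hH, hBH⟩)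
      · exact ⟨hH, hB'⟩
      · exact ⟨hH, hiii H hH hBH⟩
  have hdisj : Disjoint (𝒜.hyps.filter (fun H => F'.B ≤ H ∧ ¬ F.B ≤ H))
      (𝒜.hyps.filter (fun H => F.B ≤ H)) := by
    rw [Finset.disjoint_left]
    intro H h1 h2
    exact (Finset.mem_filter.mp h1).2.2 (Finset.mem_filter.mp h2).2
  -- the composite q₀.comp p is minimal positive from a' to y
  have hcpos : (q₀.comp p).Positive := positive_comp hq₀pos hppos
  have hplen : p.length = (SepF a y).card := garside_length hpmin
  have hclen : (q₀.comp p).length = (SepF a' y).card := by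
    rw [length_comp, hq₀len, hplen, hSa'a, hSay, hSa'y, hunion,
      Finset.card_union_of_disjoint hdisj]
  have hcmin : (q₀.comp p).Minimal := minimal_of_length_eq hclen
  -- conclude
  have hδ'2 : δ' = (⟦q₀.comp p⟧ : Mor 𝒜 a' y) := by
    rw [hδ'eq]
    exact Quotient.sound (Rel.minpos p' (q₀.comp p) hp'pos hcpos hp'min hcmin)
  have hsymm : δ.symm = (⟦p.inv⟧ : Mor 𝒜 y a) := by
    rw [hδeq]
    rfl
  have hfinal : δ'.comp δ.symm = (⟦q₀⟧ : Mor 𝒜 a' a) := by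
    rw [hδ'2, hsymm, Mor.comp_mk]
    apply Quotient.sound
    rw [Path.comp_assoc]
    have h1 : Rel 𝒜 ((q₀.comp p).comp p.inv) ((q₀.comp p).comp p.inv) := Rel.refl _
    have h2 : Rel 𝒜 (q₀.comp (p.comp p.inv)) (q₀.comp (Path.nil a)) :=
      Rel.congr_left q₀ (Rel.cancel p)
    rw [Path.comp_nil] at h2
    exact h2
  rw [hfinal]
  exact hcore
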